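/- arXiv:1503.04460 — 4 statements merged into one kernel-verified Lean document; each statement's English description precedes it below -/
import Mathlib

section
/- (Infimal characterization of distortion risks.) Let Φ be a distortion kernel and suppose the distortion risk measure ρ_Φ is finite and norm-continuous on Lᵖ (p ∈ [1, ∞)). Then for every X ∈ Lᵖ that is bounded below, there exists a lower semicontinuous coherent risk measure ρ on Lᵖ with ρ(Z) ≥ ρ_Φ(Z) for all Z ∈ Lᵖ and ρ(X) = ρ_Φ(X); consequently ρ_Φ(X) = min{ρ(X) : ρ a lower semicontinuous coherent risk measure on Lᵖ with ρ ≥ ρ_Φ}. -/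
open MeasureTheory Filter
open scoped ENNReal Pointwise Classical

noncomputable section

variable {Ω : Type*} [MeasurableSpace Ω]

/-- The dual set `Δ_φ = {Y ∈ L^q | E(XY) ≤ φ(X) for all X ∈ L^p}`. -/
def dualSet (P : Measure Ω) (p q : ℝ≥0∞) (φ : Lp ℝ p P → EReal) : Set (Lp ℝ q P) :=
  {Y | ∀ X : Lp ℝ p P, ((∫ ω, X ω * Y ω ∂P : ℝ) : EReal) ≤ φ X}

/-- The infimal convolution `φ₁ □ ⋯ □ φₙ`. -/
def infConv (P : Measure Ω) (p : ℝ≥0∞) {n : ℕ} (φ : Fin n → (Lp ℝ p P → EReal))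
    (X : Lp ℝ p P) : EReal :=
  ⨅ (Xs : Fin n → Lp ℝ p P) (_ : ∑ i, Xs i = X), ∑ i, φ i (Xs i)

/-- The convex conjugate `φ*(Y) = sup_X E(XY) − φ(X)`. -/
def conjugate (P : Measure Ω) (p q : ℝ≥0∞) (φ : Lp ℝ p P → EReal) (Y : Lp ℝ q P) : EReal :=
  ⨆ X : Lp ℝ p P, ((∫ ω, X ω * Y ω ∂P : ℝ) : EReal) - φ X

/-- A (lower semicontinuous) coherent risk measure on `L^p`, with values in `ℝ ∪ {+∞}`:
positively homogeneous, cash-invariant, monotone and subadditive. -/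
structure IsCoherentRiskMeasure (P : Measure Ω) [IsFiniteMeasure P] (p : ℝ≥0∞) [Fact (1 ≤ p)]
    (ρ : Lp ℝ p P → EReal) : Prop where
  ne_bot : ∀ X, ρ X ≠ ⊥
  lsc : LowerSemicontinuous ρ
  posHom : ∀ (c : ℝ), 0 < c → ∀ X, ρ (c • X) = (c : EReal) * ρ X
  cash : ∀ (c : ℝ) (X : Lp ℝ p P), ρ (X + (memLp_const c).toLp (fun _ => c)) = ρ X + (c : EReal)
  mono : ∀ X Y : Lp ℝ p P, (X : Ω → ℝ) ≤ᵐ[P] (Y : Ω → ℝ) → ρ X ≤ ρ Y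
  subadd : ∀ X Y : Lp ℝ p P, ρ (X + Y) ≤ ρ X + ρ Y


/-- `VaR_t(X) = inf {x ∈ ℝ | P(X > x) ≤ 1 − t}`. -/
def VaR (P : Measure Ω) (X : Ω → ℝ) (t : ℝ) : ℝ :=
  sInf {x : ℝ | P {ω | x < X ω} ≤ ENNReal.ofReal (1 - t)}

/-- A distortion kernel: a nondecreasing right-continuous `Φ : [0,1] → [0,1]` with
`Φ(0) = 0` and `Φ(1) = 1`, modelled as a Stieltjes function on `ℝ` extended by `0`
to the left of `0` and by `1` to the right of `1`. -/
structure DistortionKernel where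
  toStieltjes : StieltjesFunction ℝ
  zero_of_nonpos : ∀ x : ℝ, x ≤ 0 → toStieltjes x = 0
  one_of_one_le : ∀ x : ℝ, 1 ≤ x → toStieltjes x = 1

/-- The distortion risk measure `ρ_Φ(X) = ∫₀¹ VaR_t(X) dΦ(t)` (integral against the
Lebesgue–Stieltjes measure of `Φ`). -/
def distortionRisk (P : Measure Ω) (K : DistortionKernel) (X : Ω → ℝ) : ℝ :=
  ∫ t in Set.Ioc (0 : ℝ) 1, VaR P X t ∂K.toStieltjes.measure

/-- The cumulative distribution function `F_X(x) = P(X ≤ x)`. -/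
def cdf (P : Measure Ω) (X : Ω → ℝ) (x : ℝ) : ℝ :=
  (P {ω | X ω ≤ x}).toReal


/-! ### Auxiliary lemmas for `stmt3` -/

section Stmt3Aux

open Set Topology

/-- The defining set of `VaR`. -/
def Sset (P : Measure Ω) (Z : Ω → ℝ) (t : ℝ) : Set ℝ :=
  {x : ℝ | P {ω | x < Z ω} ≤ ENNReal.ofReal (1 - t)}

lemma VaR_eq_sInf (P : Measure Ω) (Z : Ω → ℝ) (t : ℝ) : VaR P Z t = sInf (Sset P Z t) := rfl

lemma VaR_congr (P : Measure Ω) {Z W : Ω → ℝ} (h : Z =ᵐ[P] W) (t : ℝ) :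
    VaR P Z t = VaR P W t := by
  have hset : ∀ x : ℝ, P {ω | x < Z ω} = P {ω | x < W ω} := by
    intro x
    refine measure_congr (h.mono fun ω hω => ?_)
    change (x < Z ω) = (x < W ω)
    rw [hω]
  unfold VaR
  simp only [hset]

lemma Sset_congr (P : Measure Ω) {Z W : Ω → ℝ} (h : Z =ᵐ[P] W) (t : ℝ) :
    Sset P Z t = Sset P W t := by
  have hset : ∀ x : ℝ, P {ω | x < Z ω} = P {ω | x < W ω} := by
    intro x
    refine measure_congr (h.mono fun ω hω => ?_)
    change (x < Z ω) = (x < W ω)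
    rw [hω]
  unfold Sset
  simp only [hset]

lemma tendsto_tail_zero (P : Measure Ω) [IsFiniteMeasure P] {Z : Ω → ℝ}
    (hZ : AEMeasurable Z P) :
    Tendsto (fun n : ℕ => P {ω | (n : ℝ) < Z ω}) atTop (𝓝 0) := by
  have hempty : ⋂ n : ℕ, {ω | (n : ℝ) < Z ω} = (∅ : Set Ω) := by
    ext ω
    simp only [Set.mem_iInter, Set.mem_setOf_eq, Set.mem_empty_iff_false, iff_false, not_forall,
      not_lt]
    obtain ⟨n, hn⟩ := exists_nat_gt (Z ω)
    exact ⟨n, hn.le⟩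
  have h := tendsto_measure_iInter_atTop (μ := P) (s := fun n : ℕ => {ω | (n : ℝ) < Z ω})
    (fun n => nullMeasurableSet_lt aemeasurable_const hZ)
    (fun m n hmn => fun ω hω => show (m : ℝ) < Z ω from
      lt_of_le_of_lt (Nat.cast_le.mpr hmn) hω)
    ⟨0, measure_ne_top _ _⟩
  rwa [hempty, measure_empty] at h

lemma tendsto_tail_one (P : Measure Ω) [IsProbabilityMeasure P] (Z : Ω → ℝ) :
    Tendsto (fun n : ℕ => P {ω | (-(n : ℝ)) < Z ω}) atTop (𝓝 1) := by
  have huniv : ⋃ n : ℕ, {ω | (-(n : ℝ)) < Z ω} = (Set.univ : Set Ω) := by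
    ext ω
    simp only [Set.mem_iUnion, Set.mem_setOf_eq, Set.mem_univ, iff_true]
    obtain ⟨n, hn⟩ := exists_nat_gt (-(Z ω))
    exact ⟨n, by linarith⟩
  have h := tendsto_measure_iUnion_atTop (μ := P) (s := fun n : ℕ => {ω | (-(n : ℝ)) < Z ω})
    (fun m n hmn ω hω => show (-(n : ℝ)) < Z ω from
      lt_of_le_of_lt (neg_le_neg (Nat.cast_le.mpr hmn)) hω)
  rwa [huniv, measure_univ] at h

lemma bddBelow_Sset (P : Measure Ω) [IsProbabilityMeasure P] (Z : Ω → ℝ) {t : ℝ}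
    (ht : 0 < t) : BddBelow (Sset P Z t) := by
  have hlt : ENNReal.ofReal (1 - t) < 1 := ENNReal.ofReal_lt_one.2 (by linarith)
  obtain ⟨n, hn⟩ := ((tendsto_tail_one P Z).eventually (lt_mem_nhds hlt)).exists
  refine ⟨-(n : ℝ), fun x hx => ?_⟩
  by_contra hcon
  push_neg at hcon
  have hsub : {ω | (-(n : ℝ)) < Z ω} ⊆ {ω | x < Z ω} := fun ω hω => lt_trans hcon hω
  exact absurd (le_trans (measure_mono hsub) hx) (not_le.2 hn)

lemma nonempty_Sset_of_lt_one (P : Measure Ω) [IsFiniteMeasure P] {Z : Ω → ℝ}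
    (hZ : AEMeasurable Z P) {t : ℝ} (ht : t < 1) : (Sset P Z t).Nonempty := by
  have hpos : 0 < ENNReal.ofReal (1 - t) := ENNReal.ofReal_pos.2 (by linarith)
  obtain ⟨n, hn⟩ := ((tendsto_tail_zero P hZ).eventually (gt_mem_nhds hpos)).exists
  exact ⟨n, hn.le⟩

lemma nonempty_Sset_of_dichotomy (P : Measure Ω) [IsFiniteMeasure P] {Z : Ω → ℝ}
    (hZ : AEMeasurable Z P) {ε : ℝ≥0∞} (hε : 0 < ε)
    (hdich : ∀ A : Set Ω, P A = 0 ∨ ε ≤ P A) (t : ℝ) : (Sset P Z t).Nonempty := by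
  obtain ⟨n, hn⟩ := ((tendsto_tail_zero P hZ).eventually (gt_mem_nhds hε)).exists
  refine ⟨n, ?_⟩
  have := (hdich {ω | (n : ℝ) < Z ω}).resolve_right (not_le.2 hn)
  simp only [Sset, Set.mem_setOf_eq, this]
  exact zero_le

lemma VaR_le_affine (P : Measure Ω) [IsProbabilityMeasure P] {Z W : Ω → ℝ} {c b t : ℝ}
    (hc : 0 ≤ c) (h : Z ≤ᵐ[P] fun ω => c * W ω + b)
    (hbZ : BddBelow (Sset P Z t)) (hneW : (Sset P W t).Nonempty) :
    VaR P Z t ≤ c * VaR P W t + b := by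
  rcases eq_or_lt_of_le hc with hc0 | hcpos
  · have hb : b ∈ Sset P Z t := by
      have hnull : P {ω | b < Z ω} = 0 := by
        rw [measure_eq_zero_iff_ae_notMem]
        filter_upwards [h] with ω hω
        simp only [Set.mem_setOf_eq, not_lt]
        calc Z ω ≤ c * W ω + b := hω
        _ = b := by rw [← hc0]; ring
      show P {ω | b < Z ω} ≤ _
      rw [hnull]
      exact zero_le
    calc VaR P Z t ≤ b := csInf_le hbZ hb
    _ = c * VaR P W t + b := by rw [← hc0]; ring
  · have hsub : ∀ x ∈ Sset P W t, c * x + b ∈ Sset P Z t := by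
      intro x hx
      refine le_trans (measure_mono_ae ?_) hx
      filter_upwards [h] with ω hω hmem
      have hmem' : c * x + b < Z ω := hmem
      show x < W ω
      have : c * x < c * W ω := by linarith
      exact lt_of_mul_lt_mul_left this hc
    have h2 : (VaR P Z t - b) / c ≤ sInf (Sset P W t) := by
      refine le_csInf hneW fun x hx => ?_
      rw [div_le_iff₀ hcpos]
      have := csInf_le hbZ (hsub x hx)
      rw [VaR_eq_sInf]
      linarith [mul_comm x c ▸ this]
    simp only [VaR_eq_sInf] at h2 ⊢
    rw [div_le_iff₀ hcpos] at h2
    linarith [h2, mul_comm (sInf (Sset P W t)) c]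

lemma VaR_nonneg (P : Measure Ω) [IsProbabilityMeasure P] {Z : Ω → ℝ}
    (h : 0 ≤ᵐ[P] Z) {t : ℝ} (ht : 0 < t) : 0 ≤ VaR P Z t := by
  have hlt : ENNReal.ofReal (1 - t) < 1 := ENNReal.ofReal_lt_one.2 (by linarith)
  refine Real.sInf_nonneg fun x hx => ?_
  by_contra hcon
  push_neg at hcon
  have hfull : (Set.univ : Set Ω) ≤ᵐ[P] {ω | x < Z ω} := by
    filter_upwards [h] with ω hω _
    exact lt_of_lt_of_le hcon hω
  have h1 : (1 : ℝ≥0∞) ≤ P {ω | x < Z ω} := by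
    calc (1 : ℝ≥0∞) = P Set.univ := (measure_univ (μ := P)).symm
    _ ≤ P {ω | x < Z ω} := measure_mono_ae hfull
  exact absurd (lt_of_le_of_lt (le_trans h1 hx) hlt) (lt_irrefl _)

lemma VaR_indicator_one (P : Measure Ω) [IsProbabilityMeasure P] {E : Set Ω}
    (hE : 0 < P E) {a : ℝ} (ha : 0 < a) :
    VaR P (E.indicator fun _ => a) 1 = a := by
  have hset : Sset P (E.indicator fun _ => a) 1 = Set.Ici a := by
    ext x
    simp only [Sset, Set.mem_setOf_eq, sub_self, ENNReal.ofReal_zero, nonpos_iff_eq_zero,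
      Set.mem_Ici]
    constructor
    · intro hx
      by_contra hcon
      push_neg at hcon
      have hsub : E ⊆ {ω | x < E.indicator (fun _ => a) ω} := fun ω hω => by
        simp only [Set.mem_setOf_eq, Set.indicator_of_mem hω]
        exact hcon
      exact absurd hx (by
        intro h0
        exact absurd (lt_of_lt_of_le hE (measure_mono hsub)) (by simp [h0]))
    · intro hx
      have : {ω | x < E.indicator (fun _ => a) ω} = (∅ : Set Ω) := by
        ext ω
        simp only [Set.mem_setOf_eq, Set.mem_empty_iff_false, iff_false, not_lt]
        by_cases hω : ω ∈ E
        · rw [Set.indicator_of_mem hω]; exact hx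
        · rw [Set.indicator_of_notMem hω]; linarith
      rw [this, measure_empty]
  rw [VaR_eq_sInf, hset, csInf_Ici]

lemma stieltjes_Ioc_one (K : DistortionKernel) :
    K.toStieltjes.measure (Set.Ioc (0:ℝ) 1) = 1 := by
  rw [StieltjesFunction.measure_Ioc, K.one_of_one_le 1 le_rfl, K.zero_of_nonpos 0 le_rfl,
    sub_zero, ENNReal.ofReal_one]

lemma isProb_restrict (K : DistortionKernel) :
    IsProbabilityMeasure (K.toStieltjes.measure.restrict (Set.Ioc (0:ℝ) 1)) :=
  ⟨by rw [Measure.restrict_apply_univ]; exact stieltjes_Ioc_one K⟩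

lemma distortionRisk_le_affine {P : Measure Ω} [IsProbabilityMeasure P]
    {p : ℝ≥0∞} [Fact (1 ≤ p)] {K : DistortionKernel}
    (hfin : ∀ X : Lp ℝ p P,
      IntegrableOn (fun t => VaR P (⇑X) t) (Set.Ioc 0 1) K.toStieltjes.measure)
    (hGood : ∀ᵐ t ∂(K.toStieltjes.measure.restrict (Set.Ioc (0:ℝ) 1)),
      ∀ Z : Lp ℝ p P, (Sset P (⇑Z) t).Nonempty)
    (Z W : Lp ℝ p P) {c b : ℝ} (hc : 0 ≤ c)
    (h : (⇑Z : Ω → ℝ) ≤ᵐ[P] fun ω => c * W ω + b) :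
    distortionRisk P K ⇑Z ≤ c * distortionRisk P K ⇑W + b := by
  have hprob := isProb_restrict K
  have hintW : Integrable (fun t => c * VaR P (⇑W) t + b)
      (K.toStieltjes.measure.restrict (Set.Ioc (0:ℝ) 1)) :=
    ((hfin W).const_mul c).add (integrable_const b)
  have hmono : ∀ᵐ t ∂(K.toStieltjes.measure.restrict (Set.Ioc (0:ℝ) 1)),
      VaR P (⇑Z) t ≤ c * VaR P (⇑W) t + b := by
    filter_upwards [hGood, ae_restrict_mem measurableSet_Ioc] with t hne hmem
    exact VaR_le_affine P hc h (bddBelow_Sset P (⇑Z) hmem.1) (hne W)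
  have h1 : distortionRisk P K ⇑Z ≤
      ∫ t, (c * VaR P (⇑W) t + b) ∂(K.toStieltjes.measure.restrict (Set.Ioc (0:ℝ) 1)) :=
    integral_mono_ae (hfin Z) hintW hmono
  have h2 : ∫ t, (c * VaR P (⇑W) t + b) ∂(K.toStieltjes.measure.restrict (Set.Ioc (0:ℝ) 1))
      = c * distortionRisk P K ⇑W + b := by
    rw [integral_add ((hfin W).const_mul c) (integrable_const b), integral_const_mul,
      integral_const, probReal_univ, one_smul]
    rfl
  rw [h2] at h1
  exact h1

lemma measure_singleton_one_eq_zero {P : Measure Ω} [IsProbabilityMeasure P]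
    {p : ℝ≥0∞} [Fact (1 ≤ p)] (hp : p ≠ ∞) {K : DistortionKernel}
    (hfin : ∀ X : Lp ℝ p P,
      IntegrableOn (fun t => VaR P (⇑X) t) (Set.Ioc 0 1) K.toStieltjes.measure)
    (hcont : Continuous fun X : Lp ℝ p P => distortionRisk P K ⇑X)
    (hsm : ∀ ε : ℝ≥0∞, 0 < ε → ∃ E : Set Ω, MeasurableSet E ∧ 0 < P E ∧ P E ≤ ε) :
    K.toStieltjes.measure {(1:ℝ)} = 0 := by
  by_contra hne
  have hμfin : K.toStieltjes.measure {(1:ℝ)} ≠ ∞ := by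
    refine ne_top_of_le_ne_top ?_ (measure_mono (show {(1:ℝ)} ⊆ Set.Ioc (0:ℝ) 1 by
      simp))
    rw [stieltjes_Ioc_one K]
    exact ENNReal.one_ne_top
  set δ := (K.toStieltjes.measure {(1:ℝ)}).toReal with hδ
  have hδpos : 0 < δ := ENNReal.toReal_pos hne hμfin
  have hppos : p ≠ 0 := by
    have h1 : (1:ℝ≥0∞) ≤ p := Fact.out
    intro h0
    rw [h0] at h1
    exact absurd h1 (by simp)
  set pr := p.toReal with hpr
  have hprpos : 0 < pr := ENNReal.toReal_pos hppos hp
  have hchoice : ∀ k : ℕ, ∃ E : Set Ω, MeasurableSet E ∧ 0 < P E ∧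
      P E ≤ ENNReal.ofReal (((k:ℝ)+1) ^ (-(2*pr))) :=
    fun k => hsm _ (ENNReal.ofReal_pos.2 (Real.rpow_pos_of_pos (by positivity) _))
  choose E hEmeas hEpos hEle using hchoice
  set f : ℕ → Ω → ℝ := fun k => (E k).indicator (fun _ => ((k:ℝ)+1)) with hfdef
  have hmem : ∀ k, MemLp (f k) p P := fun k =>
    memLp_indicator_const p (hEmeas k) _ (Or.inr (measure_ne_top _ _))
  set Z : ℕ → Lp ℝ p P := fun k => (hmem k).toLp (f k) with hZdef
  have hnorm : ∀ k : ℕ, ‖Z k‖ ≤ ((k:ℝ)+1)⁻¹ := by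
    intro k
    rw [Lp.norm_toLp, eLpNorm_indicator_const (hEmeas k) hppos hp]
    have h1 : P (E k) ^ ((1:ℝ)/pr) ≤ ENNReal.ofReal (((k:ℝ)+1) ^ (-(2:ℝ))) := by
      calc P (E k) ^ ((1:ℝ)/pr) ≤ (ENNReal.ofReal (((k:ℝ)+1) ^ (-(2*pr)))) ^ ((1:ℝ)/pr) :=
        ENNReal.rpow_le_rpow (hEle k) (by positivity)
      _ = ENNReal.ofReal ((((k:ℝ)+1) ^ (-(2*pr))) ^ ((1:ℝ)/pr)) :=
        ENNReal.ofReal_rpow_of_pos (Real.rpow_pos_of_pos (by positivity) _)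
      _ = ENNReal.ofReal (((k:ℝ)+1) ^ (-(2:ℝ))) := by
        rw [← Real.rpow_mul (by positivity),
          show (-(2*pr)) * ((1:ℝ)/pr) = -(2:ℝ) by field_simp]
    have h2 : ((‖((k:ℝ)+1)‖₊ : ℝ≥0∞) * P (E k) ^ ((1:ℝ)/pr)).toReal
        ≤ (((k:ℝ)+1)) * (((k:ℝ)+1) ^ (-(2:ℝ))) := by
      rw [ENNReal.toReal_mul]
      have hc1 : ((‖((k:ℝ)+1)‖₊ : ℝ≥0∞)).toReal = (k:ℝ)+1 := by
        simp [Real.norm_of_nonneg (by positivity : (0:ℝ) ≤ (k:ℝ)+1)]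
      rw [hc1]
      refine mul_le_mul_of_nonneg_left ?_ (by positivity)
      exact ENNReal.toReal_le_of_le_ofReal (by positivity) h1
    refine le_trans h2 (le_of_eq ?_)
    have hrw : ((k:ℝ)+1) ^ (-(2:ℝ)) = (((k:ℝ)+1) ^ (2:ℝ))⁻¹ :=
      Real.rpow_neg (by positivity) 2
    rw [hrw]
    have h3 : ((k:ℝ)+1) ^ (2:ℝ) = ((k:ℝ)+1) * ((k:ℝ)+1) := by
      rw [show (2:ℝ) = ((2:ℕ):ℝ) by norm_num, Real.rpow_natCast]
      ring
    rw [h3]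
    have hk1 : (0:ℝ) < (k:ℝ)+1 := by positivity
    field_simp
  have htendnorm : Tendsto (fun k : ℕ => ‖Z k‖) atTop (𝓝 0) := by
    have hbase : Tendsto (fun k : ℕ => ((k:ℝ)+1)⁻¹) atTop (𝓝 0) := by
      have := tendsto_one_div_add_atTop_nhds_zero_nat (𝕜 := ℝ)
      simpa [one_div] using this
    exact squeeze_zero (fun k => norm_nonneg _) hnorm hbase
  have htend : Tendsto Z atTop (𝓝 (0 : Lp ℝ p P)) :=
    tendsto_zero_iff_norm_tendsto_zero.2 htendnorm
  have hVaRcongr : ∀ (k : ℕ) (t : ℝ), VaR P (⇑(Z k)) t = VaR P (f k) t :=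
    fun k t => VaR_congr P ((hmem k).coeFn_toLp) t
  have hlow : ∀ k : ℕ, δ * ((k:ℝ)+1) ≤ distortionRisk P K ⇑(Z k) := by
    intro k
    have hrw : (fun t => VaR P (⇑(Z k)) t) = fun t => VaR P (f k) t := funext (hVaRcongr k)
    have hint : IntegrableOn (fun t => VaR P (f k) t) (Set.Ioc 0 1) K.toStieltjes.measure := by
      rw [← hrw]
      exact hfin (Z k)
    have hnn : ∀ᵐ t ∂(K.toStieltjes.measure.restrict (Set.Ioc (0:ℝ) 1)),
        0 ≤ VaR P (f k) t := by
      filter_upwards [ae_restrict_mem measurableSet_Ioc] with t hmem'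
      exact VaR_nonneg P (Filter.Eventually.of_forall fun ω =>
        Set.indicator_nonneg (fun _ _ => by positivity) ω) hmem'.1
    have hsing : ∫ t in ({1} : Set ℝ), VaR P (f k) t ∂K.toStieltjes.measure
        = δ * ((k:ℝ)+1) := by
      rw [Measure.restrict_singleton, integral_smul_measure, integral_dirac,
        VaR_indicator_one P (hEpos k) (by positivity)]
      simp [hδ, smul_eq_mul]
    have hsub : ∫ t in ({1} : Set ℝ), VaR P (f k) t ∂K.toStieltjes.measure ≤
        ∫ t in Set.Ioc (0:ℝ) 1, VaR P (f k) t ∂K.toStieltjes.measure :=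
      setIntegral_mono_set hint hnn (HasSubset.Subset.eventuallyLE (by simp))
    have : distortionRisk P K ⇑(Z k)
        = ∫ t in Set.Ioc (0:ℝ) 1, VaR P (f k) t ∂K.toStieltjes.measure := by
      unfold distortionRisk
      rw [hrw]
    rw [this, ← hsing]
    exact hsub
  have hlim : Tendsto (fun k => distortionRisk P K ⇑(Z k)) atTop
      (𝓝 (distortionRisk P K ⇑(0 : Lp ℝ p P))) := (hcont.tendsto _).comp htend
  set r₀ := distortionRisk P K ⇑(0 : Lp ℝ p P) with hr₀
  have hev : ∀ᶠ k in atTop, distortionRisk P K ⇑(Z k) < r₀ + 1 :=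
    hlim.eventually (gt_mem_nhds (lt_add_one r₀))
  obtain ⟨k, hk1, hk2⟩ := (hev.and (eventually_ge_atTop ⌈(r₀+1)/δ⌉₊)).exists
  have hcontr : (r₀ + 1) ≤ δ * ((k:ℝ)+1) := by
    have h1 : (r₀+1)/δ ≤ (⌈(r₀+1)/δ⌉₊ : ℝ) := Nat.le_ceil _
    have h2 : ((⌈(r₀+1)/δ⌉₊ : ℝ)) ≤ (k:ℝ) := Nat.cast_le.2 hk2
    rw [div_le_iff₀ hδpos] at h1
    nlinarith
  exact absurd (lt_of_le_of_lt (le_trans hcontr (hlow k)) hk1) (lt_irrefl _)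

lemma liminf_map_aux {α β : Type*} [Nonempty β] (u : β → EReal) (m : α → β) (F : Filter α) :
    Filter.liminf u (Filter.map m F) = Filter.liminf (fun a => u (m a)) F := by
  show Filter.limsInf (Filter.map u (Filter.map m F))
      = Filter.limsInf (Filter.map (fun a => u (m a)) F)
  rw [Filter.map_map]
  rfl

end Stmt3Aux


theorem stmt3 (P : Measure Ω) [IsProbabilityMeasure P]
    (p : ℝ≥0∞) [Fact (1 ≤ p)] (hp : p ≠ ∞)
    (K : DistortionKernel)
    (hfin : ∀ X : Lp ℝ p P,
      IntegrableOn (fun t => VaR P (⇑X) t) (Set.Ioc 0 1) K.toStieltjes.measure)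
    (hcont : Continuous fun X : Lp ℝ p P => distortionRisk P K ⇑X)
    (X : Lp ℝ p P) (M : ℝ) (hbd : ∀ᵐ ω ∂P, M ≤ X ω) :
    IsLeast
      {r : EReal | ∃ ρ : Lp ℝ p P → EReal, IsCoherentRiskMeasure P p ρ ∧
        (∀ Z : Lp ℝ p P, ((distortionRisk P K ⇑Z : ℝ) : EReal) ≤ ρ Z) ∧ ρ X = r}
      ((distortionRisk P K ⇑X : ℝ) : EReal) := by
  classical
  -- Step 1: the "good" a.e. property of the Stieltjes measure
  have hGood : ∀ᵐ t ∂(K.toStieltjes.measure.restrict (Set.Ioc (0:ℝ) 1)),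
      ∀ Z : Lp ℝ p P, (Sset P (⇑Z) t).Nonempty := by
    by_cases hsm : ∀ ε : ℝ≥0∞, 0 < ε → ∃ E : Set Ω, MeasurableSet E ∧ 0 < P E ∧ P E ≤ ε
    · have h1 := measure_singleton_one_eq_zero hp hfin hcont hsm
      have hν1 : (K.toStieltjes.measure.restrict (Set.Ioc (0:ℝ) 1)) {(1:ℝ)} = 0 :=
        le_antisymm (le_trans (Measure.restrict_le_self _) h1.le) (zero_le)
      have hne1 : ∀ᵐ t ∂(K.toStieltjes.measure.restrict (Set.Ioc (0:ℝ) 1)), t ≠ 1 := by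
        rw [ae_iff]
        convert hν1 using 2
        ext t
        simp [not_not]
      filter_upwards [hne1, ae_restrict_mem measurableSet_Ioc] with t h1' hmem Z
      exact nonempty_Sset_of_lt_one P (Lp.aestronglyMeasurable Z).aemeasurable
        (lt_of_le_of_ne hmem.2 h1')
    · push_neg at hsm
      obtain ⟨ε, hε, hdich⟩ := hsm
      have hdich' : ∀ A : Set Ω, P A = 0 ∨ ε ≤ P A := by
        intro A
        rcases eq_or_ne (P A) 0 with h0 | h0
        · exact Or.inl h0
        · right
          have hB := hdich (toMeasurable P A) (measurableSet_toMeasurable P A)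
          rw [measure_toMeasurable] at hB
          exact (hB (h0.bot_lt)).le
      refine Filter.Eventually.of_forall fun t Z => ?_
      exact nonempty_Sset_of_dichotomy P (Lp.aestronglyMeasurable Z).aemeasurable hε hdich' t
  have hkey : ∀ (Z W : Lp ℝ p P) (c b : ℝ), 0 ≤ c →
      ((⇑Z : Ω → ℝ) ≤ᵐ[P] fun ω => c * W ω + b) →
      distortionRisk P K ⇑Z ≤ c * distortionRisk P K ⇑W + b :=
    fun Z W c b hc h => distortionRisk_le_affine hfin hGood Z W hc h
  -- Step 2: the candidate sets and the auxiliary functional ρ₀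
  set A : ℝ := distortionRisk P K ⇑X with hA
  set Cand : Lp ℝ p P → Set ℝ := fun Z =>
    {r | ∃ c b : ℝ, 0 ≤ c ∧ ((⇑Z : Ω → ℝ) ≤ᵐ[P] fun ω => c * X ω + b) ∧ r = c * A + b}
    with hCand
  set ρ₀ : Lp ℝ p P → EReal := fun Z =>
    if (Cand Z).Nonempty then (((sInf (Cand Z) : ℝ)) : EReal) else ⊤ with hρ₀
  set ρ : Lp ℝ p P → EReal := fun Z => Filter.liminf ρ₀ (nhds Z) with hρdef
  have hlbC : ∀ (Z : Lp ℝ p P) (r : ℝ), r ∈ Cand Z → distortionRisk P K ⇑Z ≤ r := by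
    rintro Z r ⟨c, b, hc, hle, rfl⟩
    exact hkey Z X c b hc hle
  have hbddC : ∀ Z, BddBelow (Cand Z) :=
    fun Z => ⟨distortionRisk P K ⇑Z, fun r hr => hlbC Z r hr⟩
  have hneX : A ∈ Cand X := by
    simp only [hCand, Set.mem_setOf_eq]
    refine ⟨1, 0, zero_le_one, Filter.Eventually.of_forall fun ω => le_of_eq (by ring), by ring⟩
  have hρ₀_lb : ∀ Z : Lp ℝ p P, ((distortionRisk P K (⇑Z : Ω → ℝ) : ℝ) : EReal) ≤ ρ₀ Z := by
    intro Z
    simp only [hρ₀]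
    by_cases hne : (Cand Z).Nonempty
    · rw [if_pos hne]
      exact_mod_cast le_csInf hne (fun r hr => hlbC Z r hr)
    · rw [if_neg hne]
      exact le_top
  have hρ₀bot : ∀ Z, ρ₀ Z ≠ ⊥ := by
    intro Z hbot
    have := hρ₀_lb Z
    rw [hbot, le_bot_iff] at this
    exact EReal.coe_ne_bot _ this
  have hρ₀X : ρ₀ X ≤ ((A : ℝ) : EReal) := by
    simp only [hρ₀]
    rw [if_pos ⟨A, hneX⟩]
    exact_mod_cast csInf_le (hbddC X) hneX
  -- monotonicity of ρ₀
  have hmono₀ : ∀ Z W : Lp ℝ p P, ((⇑Z : Ω → ℝ) ≤ᵐ[P] ⇑W) → ρ₀ Z ≤ ρ₀ W := by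
    intro Z W hZW
    have hsub : Cand W ⊆ Cand Z := by
      rintro r ⟨c, b, hc, hle, rfl⟩
      exact ⟨c, b, hc, hZW.trans hle, rfl⟩
    simp only [hρ₀]
    by_cases hne : (Cand W).Nonempty
    · rw [if_pos hne, if_pos (hne.mono hsub)]
      exact_mod_cast csInf_le_csInf (hbddC Z) hne hsub
    · rw [if_neg hne]
      exact le_top
  -- positive homogeneity of ρ₀
  have hscale₀ : ∀ (c : ℝ), 0 < c → ∀ Z, ρ₀ (c • Z) = ((c : ℝ) : EReal) * ρ₀ Z := by
    intro c hc Z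
    have hset : Cand (c • Z) = (fun r => c * r) '' Cand Z := by
      ext r
      constructor
      · rintro ⟨c', b', hc', hle, rfl⟩
        refine ⟨(c'/c) * A + b'/c, ⟨c'/c, b'/c, by positivity, ?_, rfl⟩, by field_simp; try ring⟩
        filter_upwards [hle, Lp.coeFn_smul c Z] with ω h1 h2
        simp only [Pi.smul_apply, smul_eq_mul] at h2
        rw [h2] at h1
        rw [div_mul_eq_mul_div, ← add_div, le_div_iff₀ hc]
        linarith [h1]
      · rintro ⟨s, ⟨c', b', hc', hle, rfl⟩, rfl⟩
        refine ⟨c * c', c * b', by positivity, ?_, by ring⟩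
        filter_upwards [hle, Lp.coeFn_smul c Z] with ω h1 h2
        simp only [Pi.smul_apply, smul_eq_mul] at h2
        calc (⇑(c • Z) : Ω → ℝ) ω = c * Z ω := h2
        _ ≤ c * (c' * X ω + b') := mul_le_mul_of_nonneg_left h1 hc.le
        _ = (c * c') * X ω + c * b' := by ring
    have hnono : (Cand (c • Z)).Nonempty ↔ (Cand Z).Nonempty := by
      rw [hset, Set.image_nonempty]
    simp only [hρ₀]
    by_cases hne : (Cand Z).Nonempty
    · rw [if_pos (hnono.2 hne), if_pos hne, hset]
      have himg : (fun r => c * r) '' Cand Z = c • Cand Z := by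
        ext r
        simp only [Set.mem_image, Set.mem_smul_set, smul_eq_mul]
      rw [himg, Real.sInf_smul_of_nonneg hc.le, smul_eq_mul, EReal.coe_mul]
    · rw [if_neg (fun h => hne (hnono.1 h)), if_neg hne]
      exact (EReal.coe_mul_top_of_pos hc).symm
  -- cash invariance of ρ₀
  have hcash₀ : ∀ (cc : ℝ) (Z : Lp ℝ p P),
      ρ₀ (Z + (memLp_const cc).toLp (fun _ => cc)) = ρ₀ Z + (cc : EReal) := by
    intro cc Z
    have hco : (⇑(Z + (memLp_const cc).toLp (fun _ => cc) : Lp ℝ p P) : Ω → ℝ)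
        =ᵐ[P] fun ω => Z ω + cc := by
      filter_upwards [Lp.coeFn_add Z ((memLp_const cc).toLp (fun _ => cc)),
        MemLp.coeFn_toLp (memLp_const (μ := P) cc)] with ω h1 h2
      rw [h1]
      simp only [Pi.add_apply]
      rw [h2]
    have hset : Cand (Z + (memLp_const cc).toLp (fun _ => cc)) = (fun r => r + cc) '' Cand Z := by
      ext r
      constructor
      · rintro ⟨c', b', hc', hle, rfl⟩
        refine ⟨c' * A + (b' - cc), ⟨c', b' - cc, hc', ?_, rfl⟩, by ring⟩
        filter_upwards [hle, hco] with ω h1 h2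
        rw [h2] at h1
        linarith
      · rintro ⟨s, ⟨c', b', hc', hle, rfl⟩, rfl⟩
        refine ⟨c', b' + cc, hc', ?_, by ring⟩
        filter_upwards [hle, hco] with ω h1 h2
        rw [h2]
        linarith
    have hnono : (Cand (Z + (memLp_const cc).toLp (fun _ => cc))).Nonempty
        ↔ (Cand Z).Nonempty := by
      rw [hset, Set.image_nonempty]
    simp only [hρ₀]
    by_cases hne : (Cand Z).Nonempty
    · rw [if_pos (hnono.2 hne), if_pos hne, hset]
      have hmap : sInf ((fun r => r + cc) '' Cand Z) = sInf (Cand Z) + cc :=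
        (Monotone.map_csInf_of_continuousAt (continuousAt_id.add continuousAt_const)
          (fun a b hab => by simpa using add_le_add_right hab cc) hne (hbddC Z)).symm
      rw [hmap]
      exact_mod_cast rfl
    · rw [if_neg (fun h => hne (hnono.1 h)), if_neg hne]
      exact (EReal.top_add_coe cc).symm
  -- subadditivity of ρ₀
  have hadd₀ : ∀ U V : Lp ℝ p P, ρ₀ (U + V) ≤ ρ₀ U + ρ₀ V := by
    intro U V
    have hsum : ∀ r ∈ Cand U, ∀ s ∈ Cand V, r + s ∈ Cand (U + V) := by
      rintro r ⟨c1, b1, hc1, hle1, rfl⟩ s ⟨c2, b2, hc2, hle2, rfl⟩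
      refine ⟨c1 + c2, b1 + b2, by positivity, ?_, by ring⟩
      filter_upwards [hle1, hle2, Lp.coeFn_add U V] with ω h1 h2 h3
      rw [h3]
      simp only [Pi.add_apply]
      linarith
    by_cases hneU : (Cand U).Nonempty
    · by_cases hneV : (Cand V).Nonempty
      · have hneUV : (Cand (U + V)).Nonempty := by
          obtain ⟨r, hr⟩ := hneU
          obtain ⟨s, hs⟩ := hneV
          exact ⟨r + s, hsum r hr s hs⟩
        simp only [hρ₀]
        rw [if_pos hneU, if_pos hneV, if_pos hneUV, ← EReal.coe_add, EReal.coe_le_coe_iff]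
        refine le_of_forall_pos_le_add fun ε hε => ?_
        obtain ⟨r, hr, hrlt⟩ := exists_lt_of_csInf_lt hneU
          (lt_add_of_pos_right (sInf (Cand U)) (half_pos hε))
        obtain ⟨s, hs, hslt⟩ := exists_lt_of_csInf_lt hneV
          (lt_add_of_pos_right (sInf (Cand V)) (half_pos hε))
        have hle := csInf_le (hbddC (U + V)) (hsum r hr s hs)
        linarith
      · have hV : ρ₀ V = ⊤ := by simp only [hρ₀]; rw [if_neg hneV]
        rw [hV, EReal.add_top_of_ne_bot (hρ₀bot U)]
        exact le_top
    · have hU : ρ₀ U = ⊤ := by simp only [hρ₀]; rw [if_neg hneU]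
      rw [hU, EReal.top_add_of_ne_bot (hρ₀bot V)]
      exact le_top
  -- Step 3: ρ is the lower semicontinuous envelope (liminf) of ρ₀
  have hρ_le_ρ₀ : ∀ Z, ρ Z ≤ ρ₀ Z := by
    intro Z
    refine Filter.liminf_le_of_frequently_le' ?_
    rw [Filter.frequently_iff]
    intro U hU
    exact ⟨Z, mem_of_mem_nhds hU, le_rfl⟩
  have hcoecont : Continuous fun W : Lp ℝ p P => ((distortionRisk P K (⇑W : Ω → ℝ) : ℝ) : EReal) :=
    continuous_coe_real_ereal.comp hcont
  have hρ_lb : ∀ Z : Lp ℝ p P, ((distortionRisk P K (⇑Z : Ω → ℝ) : ℝ) : EReal) ≤ ρ Z := by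
    intro Z
    have h1 : ((distortionRisk P K (⇑Z : Ω → ℝ) : ℝ) : EReal)
        = Filter.liminf (fun W : Lp ℝ p P => ((distortionRisk P K (⇑W : Ω → ℝ) : ℝ) : EReal)) (nhds Z) :=
      ((hcoecont.tendsto Z).liminf_eq).symm
    rw [hρdef, h1]
    exact Filter.liminf_le_liminf (Filter.Eventually.of_forall fun W => hρ₀_lb W)
  have hρbot : ∀ Z, ρ Z ≠ ⊥ := by
    intro Z hbot
    have := hρ_lb Z
    rw [hbot, le_bot_iff] at this
    exact EReal.coe_ne_bot _ this
  have hlsc : LowerSemicontinuous ρ := by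
    intro Z y hy
    obtain ⟨y', hy1, hy2⟩ := exists_between hy
    have hy2' : y' < Filter.liminf ρ₀ (nhds Z) := hy2
    have hev : ∀ᶠ W in nhds Z, y' < ρ₀ W := Filter.eventually_lt_of_lt_liminf hy2'
    obtain ⟨U, hU1, hU2, hU3⟩ := eventually_nhds_iff.mp hev
    filter_upwards [hU2.mem_nhds hU3] with W hW
    have hle : y' ≤ ρ W := by
      refine Filter.le_liminf_of_le (by isBoundedDefault) ?_
      exact Filter.eventually_of_mem (hU2.mem_nhds hW) fun V hV => (hU1 V hV).le
    exact lt_of_lt_of_le hy1 hle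
  -- positive homogeneity of ρ
  have hhom : ∀ (c : ℝ), 0 < c → ∀ Z, ρ (c • Z) = ((c : ℝ) : EReal) * ρ Z := by
    intro c hc Z
    have hmap : nhds (c • Z) = Filter.map (fun W : Lp ℝ p P => c • W) (nhds Z) :=
      ((Homeomorph.smulOfNeZero c hc.ne' (α := Lp ℝ p P)).map_nhds_eq Z).symm
    have hmonoE : Monotone fun x : EReal => ((c : ℝ) : EReal) * x :=
      fun a b hab => mul_le_mul_of_nonneg_left hab (by exact_mod_cast hc.le)
    have hcontE : Continuous (fun x : EReal => ((c : ℝ) : EReal) * x) := by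
      rw [continuous_iff_continuousAt]
      intro x
      have hcne : ((c : ℝ) : EReal) ≠ 0 := by exact_mod_cast hc.ne'
      have hpair : ContinuousAt (fun y : EReal => ((((c : ℝ) : EReal)), y)) x :=
        (continuous_const.prodMk continuous_id).continuousAt
      show ContinuousAt ((fun q : EReal × EReal => q.1 * q.2) ∘
        (fun y : EReal => ((((c : ℝ) : EReal)), y))) x
      exact ContinuousAt.comp (EReal.continuousAt_mul (p := (((c : ℝ) : EReal), x))
        (Or.inl hcne) (Or.inl hcne)
        (Or.inl (EReal.coe_ne_bot c)) (Or.inl (EReal.coe_ne_top c))) hpair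
    calc ρ (c • Z) = Filter.liminf ρ₀ (Filter.map (fun W : Lp ℝ p P => c • W) (nhds Z)) := by
          rw [hρdef, ← hmap]
    _ = Filter.liminf (fun W : Lp ℝ p P => ρ₀ (c • W)) (nhds Z) := liminf_map_aux ρ₀ _ _
    _ = Filter.liminf (fun W : Lp ℝ p P => ((c : ℝ) : EReal) * ρ₀ W) (nhds Z) := by
          simp only [hscale₀ c hc]
    _ = ((c : ℝ) : EReal) * Filter.liminf ρ₀ (nhds Z) :=
          (hmonoE.map_liminf_of_continuousAt ρ₀ (hcontE.continuousAt)).symm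
    _ = ((c : ℝ) : EReal) * ρ Z := by rw [hρdef]
  -- cash invariance of ρ
  have hcash : ∀ (cc : ℝ) (Z : Lp ℝ p P),
      ρ (Z + (memLp_const cc).toLp (fun _ => cc)) = ρ Z + ((cc : ℝ) : EReal) := by
    intro cc Z
    set C : Lp ℝ p P := (memLp_const cc).toLp (fun _ => cc) with hC
    have hmap : nhds (Z + C) = Filter.map (fun W : Lp ℝ p P => W + C) (nhds Z) :=
      ((Homeomorph.addRight C).map_nhds_eq Z).symm
    have hmonoE : Monotone fun x : EReal => x + ((cc : ℝ) : EReal) :=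
      fun a b hab => add_le_add_left hab _
    have hcontE : Continuous (fun x : EReal => x + ((cc : ℝ) : EReal)) := by
      rw [continuous_iff_continuousAt]
      intro x
      have hpair : ContinuousAt (fun y : EReal => (y, (((cc : ℝ) : EReal)))) x :=
        (continuous_id.prodMk continuous_const).continuousAt
      show ContinuousAt ((fun q : EReal × EReal => q.1 + q.2) ∘
        (fun y : EReal => (y, (((cc : ℝ) : EReal))))) x
      exact ContinuousAt.comp (EReal.continuousAt_add (p := (x, ((cc : ℝ) : EReal)))
        (Or.inr (EReal.coe_ne_bot cc)) (Or.inr (EReal.coe_ne_top cc))) hpair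
    calc ρ (Z + C) = Filter.liminf ρ₀ (Filter.map (fun W : Lp ℝ p P => W + C) (nhds Z)) := by
          rw [hρdef, ← hmap]
    _ = Filter.liminf (fun W : Lp ℝ p P => ρ₀ (W + C)) (nhds Z) := liminf_map_aux ρ₀ _ _
    _ = Filter.liminf (fun W : Lp ℝ p P => ρ₀ W + ((cc : ℝ) : EReal)) (nhds Z) := by
          simp only [hC, hcash₀ cc]
    _ = Filter.liminf ρ₀ (nhds Z) + ((cc : ℝ) : EReal) :=
          (hmonoE.map_liminf_of_continuousAt ρ₀ (hcontE.continuousAt)).symm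
    _ = ρ Z + ((cc : ℝ) : EReal) := by rw [hρdef]
  -- monotonicity of ρ
  have hmonoρ : ∀ Z W : Lp ℝ p P, ((⇑Z : Ω → ℝ) ≤ᵐ[P] ⇑W) → ρ Z ≤ ρ W := by
    intro Z W hZW
    have hmap : nhds W = Filter.map (fun V : Lp ℝ p P => V + (W - Z)) (nhds Z) := by
      have h1 := (Homeomorph.addRight (W - Z)).map_nhds_eq Z
      have h2 : Z + (W - Z) = W := by abel
      rw [show (Homeomorph.addRight (W - Z)) Z = Z + (W - Z) from rfl, h2] at h1
      exact h1.symm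
    have hptwise : ∀ V : Lp ℝ p P, ρ₀ V ≤ ρ₀ (V + (W - Z)) := by
      intro V
      refine hmono₀ V (V + (W - Z)) ?_
      filter_upwards [Lp.coeFn_add V (W - Z), Lp.coeFn_sub W Z, hZW] with ω h1 h2 h3
      rw [h1]
      simp only [Pi.add_apply]
      have h2' : (⇑(W - Z) : Ω → ℝ) ω = W ω - Z ω := by rw [h2]; simp
      rw [h2']
      linarith
    calc ρ Z = Filter.liminf ρ₀ (nhds Z) := by rw [hρdef]
    _ ≤ Filter.liminf (fun V : Lp ℝ p P => ρ₀ (V + (W - Z))) (nhds Z) :=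
        Filter.liminf_le_liminf (Filter.Eventually.of_forall hptwise)
    _ = Filter.liminf ρ₀ (Filter.map (fun V : Lp ℝ p P => V + (W - Z)) (nhds Z)) :=
        (liminf_map_aux ρ₀ _ _).symm
    _ = ρ W := by rw [hρdef, ← hmap]
  -- subadditivity of ρ
  have haddρ : ∀ U V : Lp ℝ p P, ρ (U + V) ≤ ρ U + ρ V := by
    intro U V
    by_cases hUtop : ρ U = ⊤
    · rw [hUtop, EReal.top_add_of_ne_bot (hρbot V)]
      exact le_top
    by_cases hVtop : ρ V = ⊤
    · rw [hVtop, EReal.add_top_of_ne_bot (hρbot U)]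
      exact le_top
    obtain ⟨ar, har⟩ : ∃ r : ℝ, ρ U = (r : EReal) :=
      ⟨(ρ U).toReal, (EReal.coe_toReal hUtop (hρbot U)).symm⟩
    obtain ⟨br, hbr⟩ : ∃ r : ℝ, ρ V = (r : EReal) :=
      ⟨(ρ V).toReal, (EReal.coe_toReal hVtop (hρbot V)).symm⟩
    have hmain : ∀ ε : ℝ, 0 < ε → ρ (U + V) ≤ ((ar + br + ε : ℝ) : EReal) := by
      intro ε hε
      have hfa : ∃ᶠ W in nhds U, ρ₀ W < ((ar + ε/2 : ℝ) : EReal) := by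
        refine Filter.frequently_lt_of_liminf_lt (by isBoundedDefault) ?_
        have : Filter.liminf ρ₀ (nhds U) = ((ar : ℝ) : EReal) := by rw [← har, hρdef]
        rw [this]
        exact_mod_cast lt_add_of_pos_right ar (half_pos hε)
      have hfb : ∃ᶠ W in nhds V, ρ₀ W < ((br + ε/2 : ℝ) : EReal) := by
        refine Filter.frequently_lt_of_liminf_lt (by isBoundedDefault) ?_
        have : Filter.liminf ρ₀ (nhds V) = ((br : ℝ) : EReal) := by rw [← hbr, hρdef]
        rw [this]
        exact_mod_cast lt_add_of_pos_right br (half_pos hε)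
      have hprodfreq : ∃ᶠ q in (nhds U) ×ˢ (nhds V),
          ρ₀ q.1 < ((ar + ε/2 : ℝ) : EReal) ∧ ρ₀ q.2 < ((br + ε/2 : ℝ) : EReal) := by
        rw [Filter.frequently_iff]
        intro S hS
        rw [Filter.mem_prod_iff] at hS
        obtain ⟨T₁, hT₁, T₂, hT₂, hsub⟩ := hS
        obtain ⟨x, hx, hpx⟩ := Filter.frequently_iff.mp hfa hT₁
        obtain ⟨y, hy, hpy⟩ := Filter.frequently_iff.mp hfb hT₂
        exact ⟨(x, y), hsub (Set.mk_mem_prod hx hy), hpx, hpy⟩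
      have htend : Filter.Tendsto (fun q : Lp ℝ p P × Lp ℝ p P => q.1 + q.2)
          ((nhds U) ×ˢ (nhds V)) (nhds (U + V)) := by
        rw [← nhds_prod_eq]
        exact continuous_add.tendsto (U, V)
      have hle1 : ρ (U + V) ≤ Filter.liminf (fun q : Lp ℝ p P × Lp ℝ p P => ρ₀ (q.1 + q.2))
          ((nhds U) ×ˢ (nhds V)) := by
        calc ρ (U + V) = Filter.liminf ρ₀ (nhds (U + V)) := by rw [hρdef]
        _ ≤ Filter.liminf ρ₀
            (Filter.map (fun q : Lp ℝ p P × Lp ℝ p P => q.1 + q.2) ((nhds U) ×ˢ (nhds V))) :=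
          Filter.liminf_le_liminf_of_le htend
        _ = _ := liminf_map_aux ρ₀ _ _
      refine le_trans hle1 (Filter.liminf_le_of_frequently_le' (hprodfreq.mono ?_))
      rintro ⟨W1, W2⟩ ⟨h1, h2⟩
      calc ρ₀ (W1 + W2) ≤ ρ₀ W1 + ρ₀ W2 := hadd₀ W1 W2
      _ ≤ ((ar + ε/2 : ℝ) : EReal) + ((br + ε/2 : ℝ) : EReal) := add_le_add h1.le h2.le
      _ = ((ar + br + ε : ℝ) : EReal) := by
          rw [← EReal.coe_add]
          congr 1
          ring
    have hUVtop : ρ (U + V) ≠ ⊤ := by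
      intro h
      have := hmain 1 one_pos
      rw [h] at this
      exact EReal.coe_ne_top _ (top_le_iff.mp this)
    obtain ⟨g, hg⟩ : ∃ r : ℝ, ρ (U + V) = (r : EReal) :=
      ⟨(ρ (U + V)).toReal, (EReal.coe_toReal hUVtop (hρbot (U + V))).symm⟩
    rw [hg, har, hbr, ← EReal.coe_add, EReal.coe_le_coe_iff]
    refine le_of_forall_pos_le_add fun ε hε => ?_
    have := hmain ε hε
    rw [hg, EReal.coe_le_coe_iff] at this
    linarith
  -- Step 4: conclusion
  have hρX : ρ X = ((A : ℝ) : EReal) :=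
    le_antisymm (le_trans (hρ_le_ρ₀ X) hρ₀X) (hρ_lb X)
  constructor
  · exact ⟨ρ, ⟨hρbot, hlsc, hhom, hcash, hmonoρ, haddρ⟩, hρ_lb, hρX⟩
  · rintro r ⟨ρ', hcoh, hdom, rfl⟩
    exact hdom X


end
end

section
/- Let ρ₁, …, ρₙ be distortion risk measures that are finite and norm-continuous on Lᵖ (p ∈ [1, ∞)), let λ₁, …, λₙ > 0, let M₁, …, Mₙ be closed convex cones in Lᵖ, and let X₀ ∈ Lᵖ be bounded below. For any map ψ : Lᵖ → ℝ ∪ {+∞} and cone M, write ψ^M(X) = ψ(X) if X ∈ M and ψ^M(X) = +∞ otherwise. If an allocation (X₁, …, Xₙ) with X₁ + ⋯ + Xₙ = X₀ minimizes Σᵢ λᵢ ρ̃ᵢ^{Mᵢ}(Xᵢ) over all allocations of X₀ for every tuple (ρ̃₁, …, ρ̃ₙ) of lower semicontinuous coherent risk measures with ρ̃ᵢ ≥ ρᵢ (pointwise) for each i, then (X₁, …, Xₙ) minimizes Σᵢ λᵢ ρᵢ^{Mᵢ}(Xᵢ) over all allocations of X₀. -/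
open MeasureTheory Filter
open scoped ENNReal Pointwise Classical

noncomputable section

variable {Ω : Type*} [MeasurableSpace Ω]

/-- `ψ^M`: the function `ψ` restricted to the set `M` (equal to `+∞` off `M`). -/
def restrictFn {P : Measure Ω} {p : ℝ≥0∞} (ψ : Lp ℝ p P → EReal) (M : Set (Lp ℝ p P)) :
    Lp ℝ p P → EReal :=
  fun X => if X ∈ M then ψ X else ⊤


namespace StmtAux

open Set Topology

/-! ### EReal order isomorphisms -/

def addIso (a : ℝ) : EReal ≃o EReal where
  toFun x := x + (a : EReal)
  invFun x := x - (a : EReal)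
  left_inv x := EReal.add_sub_cancel_right
  right_inv x := EReal.sub_add_cancel
  map_rel_iff' {x y} := (EReal.addLECancellable_coe a).add_le_add_iff_right

@[simp] lemma addIso_apply (a : ℝ) (x : EReal) : addIso a x = x + (a : EReal) := rfl

def mulIso (c : ℝ) (hc : 0 < c) : EReal ≃o EReal where
  toFun x := (c : EReal) * x
  invFun x := ((c⁻¹ : ℝ) : EReal) * x
  left_inv x := by
    show ((c⁻¹ : ℝ) : EReal) * ((c : EReal) * x) = x
    rw [← mul_assoc, ← EReal.coe_mul, inv_mul_cancel₀ hc.ne', EReal.coe_one, one_mul]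
  right_inv x := by
    show ((c : ℝ) : EReal) * (((c⁻¹ : ℝ) : EReal) * x) = x
    rw [← mul_assoc, ← EReal.coe_mul, mul_inv_cancel₀ hc.ne', EReal.coe_one, one_mul]
  map_rel_iff' {x y} := by
    show (c : EReal) * x ≤ (c : EReal) * y ↔ x ≤ y
    constructor
    · intro h
      have h2 := mul_le_mul_of_nonneg_left h (EReal.coe_nonneg.2 (inv_nonneg.2 hc.le))
      rwa [← mul_assoc, ← mul_assoc, ← EReal.coe_mul, inv_mul_cancel₀ hc.ne', EReal.coe_one,
        one_mul, one_mul] at h2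
    · intro h
      exact mul_le_mul_of_nonneg_left h (EReal.coe_nonneg.2 hc.le)

@[simp] lemma mulIso_apply (c : ℝ) (hc : 0 < c) (x : EReal) :
    mulIso c hc x = (c : EReal) * x := rfl

lemma liminf_add_coe {α : Type*} (l : Filter α) (u : α → EReal) (a : ℝ) :
    liminf (fun x => u x + (a : EReal)) l = liminf u l + (a : EReal) :=
  ((addIso a).liminf_apply).symm

lemma liminf_mul_coe {α : Type*} (l : Filter α) (u : α → EReal) {c : ℝ} (hc : 0 < c) :
    liminf (fun x => (c : EReal) * u x) l = (c : EReal) * liminf u l :=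
  ((mulIso c hc).liminf_apply).symm

lemma liminf_map' {α β : Type*} (l : Filter α) (m : α → β) (u : β → EReal) :
    liminf u (Filter.map m l) = liminf (fun x => u (m x)) l := by
  simp only [Filter.liminf_eq, Filter.eventually_map]

/-! ### VaR lemmas -/

variable {P : Measure Ω}

lemma VaR_congr {X X' : Ω → ℝ} (h : X =ᵐ[P] X') (t : ℝ) : VaR P X t = VaR P X' t := by
  have hm : ∀ x : ℝ, P {ω | x < X ω} = P {ω | x < X' ω} := fun x =>
    measure_congr (h.mono fun ω hω => by
      change (x < X ω) = (x < X' ω); rw [hω])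
  simp only [VaR, hm]

lemma VaR_set_bddBelow [IsProbabilityMeasure P] {X : Ω → ℝ} {t : ℝ} (ht : 0 < t) :
    BddBelow {x : ℝ | P {ω | x < X ω} ≤ ENNReal.ofReal (1 - t)} := by
  have hmono : Monotone fun k : ℕ => {ω | -(k : ℝ) < X ω} := by
    intro i j hij ω hω
    simp only [mem_setOf_eq] at hω ⊢
    refine lt_of_le_of_lt ?_ hω
    have hij' : (i : ℝ) ≤ j := Nat.cast_le.2 hij
    linarith
  have hU : ⋃ k : ℕ, {ω | -(k : ℝ) < X ω} = univ := by
    ext ω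
    simp only [mem_iUnion, mem_univ, iff_true, mem_setOf_eq]
    obtain ⟨k, hk⟩ := exists_nat_gt (-X ω)
    exact ⟨k, by linarith⟩
  have htend := tendsto_measure_iUnion_atTop (μ := P) hmono
  rw [hU, measure_univ] at htend
  have h1 : ENNReal.ofReal (1 - t) < 1 := ENNReal.ofReal_lt_one.2 (by linarith)
  obtain ⟨k, hk⟩ := (htend.eventually (lt_mem_nhds h1)).exists
  refine ⟨-(k : ℝ), fun x hx => ?_⟩
  by_contra hlt
  push_neg at hlt
  have hsub : P {ω | -(k : ℝ) < X ω} ≤ P {ω | x < X ω} :=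
    measure_mono fun ω hω => lt_trans hlt hω
  exact absurd (le_trans hsub hx) (not_le.2 hk)

lemma VaR_mem_of_ae_le {X : Ω → ℝ} {b : ℝ} (hb : ∀ᵐ ω ∂P, X ω ≤ b) (t : ℝ) :
    b ∈ {x : ℝ | P {ω | x < X ω} ≤ ENNReal.ofReal (1 - t)} := by
  have h0 : P {ω | b < X ω} = 0 := by
    have := ae_iff.1 hb
    simpa only [not_le] using this
  simp only [mem_setOf_eq, h0, zero_le]

lemma VaR_mono [IsProbabilityMeasure P] {X W : Ω → ℝ} (h : X ≤ᵐ[P] W) {t : ℝ} (ht : 0 < t)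
    {b : ℝ} (hbW : ∀ᵐ ω ∂P, W ω ≤ b) : VaR P X t ≤ VaR P W t := by
  apply csInf_le_csInf (VaR_set_bddBelow ht) ⟨b, VaR_mem_of_ae_le hbW t⟩
  intro x hx
  refine le_trans (measure_mono_ae ?_) hx
  exact h.mono fun ω hω hlt => lt_of_lt_of_le hlt hω

lemma VaR_set_affine {Y : Ω → ℝ} {c : ℝ} (hc : 0 < c) (s t : ℝ) :
    {x : ℝ | P {ω | x < c * Y ω + s} ≤ ENNReal.ofReal (1 - t)} =
      (fun y => c * y + s) '' {x : ℝ | P {ω | x < Y ω} ≤ ENNReal.ofReal (1 - t)} := by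
  have key : ∀ x : ℝ, {ω | x < c * Y ω + s} = {ω | (x - s) / c < Y ω} := by
    intro x
    ext ω
    rw [mem_setOf_eq, mem_setOf_eq, div_lt_iff₀ hc, mul_comm]
    constructor <;> intro h <;> linarith
  ext x
  simp only [mem_image, mem_setOf_eq, key]
  constructor
  · intro hx
    refine ⟨(x - s) / c, hx, ?_⟩
    field_simp
    ring
  · rintro ⟨y, hy, rfl⟩
    have hxy : (c * y + s - s) / c = y := by field_simp; ring
    rwa [hxy]

lemma csInf_affine_image {c s : ℝ} (hc : 0 < c) {S : Set ℝ} (hne : S.Nonempty)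
    (hbdd : BddBelow S) : sInf ((fun y => c * y + s) '' S) = c * sInf S + s := by
  obtain ⟨lb, hlb⟩ := hbdd
  have hbdd' : BddBelow ((fun y => c * y + s) '' S) := by
    refine ⟨c * lb + s, ?_⟩
    rintro _ ⟨y, hy, rfl⟩
    dsimp only
    have h' := hlb hy
    nlinarith [mul_le_mul_of_nonneg_left h' hc.le]
  apply le_antisymm
  · have h1 : (sInf ((fun y => c * y + s) '' S) - s) / c ≤ sInf S := by
      apply le_csInf hne
      intro y hy
      rw [div_le_iff₀ hc]
      have : sInf ((fun y => c * y + s) '' S) ≤ c * y + s :=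
        csInf_le hbdd' ⟨y, hy, rfl⟩
      linarith [this]
    rw [div_le_iff₀ hc] at h1
    linarith
  · apply le_csInf (hne.image _)
    rintro _ ⟨y, hy, rfl⟩
    dsimp only
    have h' : sInf S ≤ y := csInf_le ⟨lb, hlb⟩ hy
    nlinarith [mul_le_mul_of_nonneg_left h' hc.le]

lemma VaR_affine [IsProbabilityMeasure P] {Y : Ω → ℝ} {b : ℝ} (hb : ∀ᵐ ω ∂P, Y ω ≤ b)
    {c s t : ℝ} (hc : 0 < c) (ht : 0 < t) :
    VaR P (fun ω => c * Y ω + s) t = c * VaR P Y t + s := by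
  unfold VaR
  rw [VaR_set_affine hc s t]
  exact csInf_affine_image hc ⟨b, VaR_mem_of_ae_le hb t⟩ (VaR_set_bddBelow ht)

/-! ### Lp truncation -/

variable [IsProbabilityMeasure P] {p : ℝ≥0∞} [Fact (1 ≤ p)]

/-- The constant function as an element of `Lp`. -/
def constLp (P : Measure Ω) [IsProbabilityMeasure P] (p : ℝ≥0∞) [Fact (1 ≤ p)] (c : ℝ) :
    Lp ℝ p P :=
  (memLp_const c).toLp (fun _ => c)

lemma constLp_coe (c : ℝ) : ⇑(constLp P p c) =ᵐ[P] fun _ => c :=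
  (memLp_const c).coeFn_toLp

lemma trunc_coe (Z : Lp ℝ p P) (k : ℕ) :
    ⇑(Z ⊓ constLp P p (k : ℝ)) =ᵐ[P] fun ω => min (Z ω) (k : ℝ) := by
  filter_upwards [Lp.coeFn_inf Z (constLp P p (k : ℝ)), constLp_coe (P := P) (p := p) (k : ℝ)]
    with ω h1 h2
  rw [h1]
  simp only [Pi.inf_apply, h2]

lemma trunc_le (Z : Lp ℝ p P) (k : ℕ) :
    ∀ᵐ ω ∂P, (Z ⊓ constLp P p (k : ℝ)) ω ≤ (k : ℝ) := by
  filter_upwards [trunc_coe Z k] with ω h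
  rw [h]
  exact min_le_right _ _

lemma trunc_mono {Z W : Lp ℝ p P} (h : ⇑Z ≤ᵐ[P] ⇑W) (k : ℕ) :
    ⇑(Z ⊓ constLp P p (k : ℝ)) ≤ᵐ[P] ⇑(W ⊓ constLp P p (k : ℝ)) := by
  filter_upwards [trunc_coe Z k, trunc_coe W k, h] with ω h1 h2 h3
  rw [h1, h2]
  exact min_le_min h3 le_rfl

lemma trunc_tendsto (hp : p ≠ ∞) (Z : Lp ℝ p P) :
    Tendsto (fun k : ℕ => Z ⊓ constLp P p (k : ℝ)) atTop (𝓝 Z) := by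
  rw [Lp.tendsto_Lp_iff_tendsto_eLpNorm']
  have hp0 : p ≠ 0 := (lt_of_lt_of_le zero_lt_one (Fact.out : 1 ≤ p)).ne'
  have hpt : 0 < p.toReal := ENNReal.toReal_pos hp0 hp
  have hcongr : ∀ k : ℕ, eLpNorm (⇑(Z ⊓ constLp P p (k : ℝ)) - ⇑Z) p P
      = eLpNorm (fun ω => min (Z ω) (k : ℝ) - Z ω) p P := fun k =>
    eLpNorm_congr_ae ((trunc_coe Z k).sub (ae_eq_refl _))
  simp only [hcongr]
  simp only [eLpNorm_eq_lintegral_rpow_enorm_toReal hp0 hp]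
  have haem : AEMeasurable (fun ω => Z ω) P := (Lp.aestronglyMeasurable Z).aemeasurable
  have hDCT : Tendsto
      (fun k : ℕ => ∫⁻ ω, (‖min (Z ω) (k : ℝ) - Z ω‖₊ : ℝ≥0∞) ^ p.toReal ∂P) atTop (𝓝 0) := by
    have hD := tendsto_lintegral_of_dominated_convergence' (μ := P)
      (F := fun (k : ℕ) ω => (‖min (Z ω) (k : ℝ) - Z ω‖₊ : ℝ≥0∞) ^ p.toReal)
      (f := fun _ => (0 : ℝ≥0∞))
      (bound := fun ω => (‖Z ω‖₊ : ℝ≥0∞) ^ p.toReal) ?_ ?_ ?_ ?_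
    · simpa using hD
    · intro k
      exact (((haem.min aemeasurable_const).sub haem).enorm).pow_const _
    · intro k
      filter_upwards with ω
      have habs : |min (Z ω) (k : ℝ) - Z ω| ≤ |Z ω| := by
        rcases le_total (Z ω) ((k : ℝ)) with h | h
        · simp [min_eq_left h]
        · rw [min_eq_right h, abs_of_nonpos (by linarith)]
          have h0 : (0 : ℝ) ≤ (k : ℝ) := Nat.cast_nonneg k
          rw [abs_of_nonneg (by linarith : (0:ℝ) ≤ Z ω)]
          linarith
      have hnn : (‖min (Z ω) (k : ℝ) - Z ω‖₊ : ℝ≥0∞) ≤ (‖Z ω‖₊ : ℝ≥0∞) := by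
        rw [ENNReal.coe_le_coe, ← NNReal.coe_le_coe, coe_nnnorm, coe_nnnorm,
          Real.norm_eq_abs, Real.norm_eq_abs]
        exact habs
      exact ENNReal.rpow_le_rpow hnn ENNReal.toReal_nonneg
    · exact (lintegral_rpow_enorm_lt_top_of_eLpNorm_lt_top hp0 hp (Lp.eLpNorm_lt_top Z)).ne
    · filter_upwards with ω
      have hev : ∀ᶠ k : ℕ in atTop,
          (‖min (Z ω) (k : ℝ) - Z ω‖₊ : ℝ≥0∞) ^ p.toReal = 0 := by
        filter_upwards [eventually_ge_atTop ⌈Z ω⌉₊] with k hk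
        have : Z ω ≤ (k : ℝ) := le_trans (Nat.le_ceil _) (Nat.cast_le.2 hk)
        simp [min_eq_left this, ENNReal.zero_rpow_of_pos hpt]
      exact tendsto_const_nhds.congr' (hev.mono fun k hk => hk.symm)
  have hcont0 : Tendsto (fun x : ℝ≥0∞ => x ^ (1 / p.toReal)) (𝓝 0) (𝓝 0) := by
    have := (ENNReal.continuous_rpow_const (y := 1 / p.toReal)).tendsto 0
    rwa [ENNReal.zero_rpow_of_pos (by positivity)] at this
  exact hcont0.comp hDCT

/-! ### distortion risk lemmas -/

lemma dr_congr {X X' : Ω → ℝ} (K : DistortionKernel) (h : X =ᵐ[P] X') :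
    distortionRisk P K X = distortionRisk P K X' := by
  unfold distortionRisk
  congr 1
  ext t
  exact VaR_congr h t

lemma kernel_measure_Ioc (K : DistortionKernel) :
    K.toStieltjes.measure (Set.Ioc (0:ℝ) 1) = 1 := by
  rw [StieltjesFunction.measure_Ioc, K.one_of_one_le 1 le_rfl, K.zero_of_nonpos 0 le_rfl]
  simp

section DR

variable (K : DistortionKernel) (hp : p ≠ ∞)
  (hfin : ∀ X : Lp ℝ p P, IntegrableOn (fun t => VaR P (⇑X) t) (Set.Ioc 0 1)
    K.toStieltjes.measure)
  (hcont : Continuous fun X : Lp ℝ p P => distortionRisk P K ⇑X)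

include hp hfin hcont

lemma dr_mono {Z W : Lp ℝ p P} (h : ⇑Z ≤ᵐ[P] ⇑W) :
    distortionRisk P K ⇑Z ≤ distortionRisk P K ⇑W := by
  have hk : ∀ k : ℕ, distortionRisk P K ⇑(Z ⊓ constLp P p (k : ℝ))
      ≤ distortionRisk P K ⇑(W ⊓ constLp P p (k : ℝ)) := by
    intro k
    apply setIntegral_mono_on (hfin _) (hfin _) measurableSet_Ioc
    intro t ht
    exact VaR_mono (trunc_mono h k) ht.1 (trunc_le W k)
  have l1 : Tendsto (fun k : ℕ => distortionRisk P K ⇑(Z ⊓ constLp P p (k : ℝ))) atTop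
      (𝓝 (distortionRisk P K ⇑Z)) := (hcont.tendsto Z).comp (trunc_tendsto hp Z)
  have l2 : Tendsto (fun k : ℕ => distortionRisk P K ⇑(W ⊓ constLp P p (k : ℝ))) atTop
      (𝓝 (distortionRisk P K ⇑W)) := (hcont.tendsto W).comp (trunc_tendsto hp W)
  exact le_of_tendsto_of_tendsto' l1 l2 hk

omit hp hcont in
lemma dr_affine_of_bdd {Y : Lp ℝ p P} {b : ℝ} (hb : ∀ᵐ ω ∂P, Y ω ≤ b) {c : ℝ} (hc : 0 < c)
    (s : ℝ) : distortionRisk P K ⇑(c • Y + constLp P p s) =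
      c * distortionRisk P K ⇑Y + s := by
  have hcongr : ⇑(c • Y + constLp P p s) =ᵐ[P] fun ω => c * Y ω + s := by
    filter_upwards [Lp.coeFn_add (c • Y) (constLp P p s), Lp.coeFn_smul c Y,
      constLp_coe (P := P) (p := p) s] with ω h1 h2 h3
    rw [h1, Pi.add_apply, h2, Pi.smul_apply, smul_eq_mul, h3]
  rw [dr_congr K hcongr]
  unfold distortionRisk
  rw [setIntegral_congr_fun measurableSet_Ioc
    (fun t ht => VaR_affine hb hc ht.1 : EqOn _ (fun t => c * VaR P (⇑Y) t + s) _)]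
  haveI : IsFiniteMeasure (K.toStieltjes.measure.restrict (Set.Ioc (0:ℝ) 1)) := by
    constructor
    rw [Measure.restrict_apply_univ, kernel_measure_Ioc]
    exact ENNReal.one_lt_top
  rw [integral_add ((hfin Y).const_mul c) (integrable_const s), integral_const_mul c _,
    integral_const, measureReal_restrict_apply_univ, Measure.real, kernel_measure_Ioc]
  simp

lemma dr_affine (Y : Lp ℝ p P) {c : ℝ} (hc : 0 < c) (s : ℝ) :
    distortionRisk P K ⇑(c • Y + constLp P p s) = c * distortionRisk P K ⇑Y + s := by
  have hk : ∀ k : ℕ, distortionRisk P K ⇑(c • (Y ⊓ constLp P p (k : ℝ)) + constLp P p s)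
      = c * distortionRisk P K ⇑(Y ⊓ constLp P p (k : ℝ)) + s := fun k =>
    dr_affine_of_bdd K hfin (trunc_le Y k) hc s
  have l1 : Tendsto (fun k : ℕ =>
      distortionRisk P K ⇑(c • (Y ⊓ constLp P p (k : ℝ)) + constLp P p s)) atTop
      (𝓝 (distortionRisk P K ⇑(c • Y + constLp P p s))) := by
    refine (hcont.tendsto _).comp ?_
    exact ((trunc_tendsto hp Y).const_smul c).add tendsto_const_nhds
  have l2 : Tendsto (fun k : ℕ =>
      c * distortionRisk P K ⇑(Y ⊓ constLp P p (k : ℝ)) + s) atTop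
      (𝓝 (c * distortionRisk P K ⇑Y + s)) := by
    exact (((hcont.tendsto Y).comp (trunc_tendsto hp Y)).const_mul c).add_const s
  exact tendsto_nhds_unique (l1.congr hk) l2

lemma dr_key {Y Z : Lp ℝ p P} {c s : ℝ} (hc : 0 < c)
    (hcert : ∀ᵐ ω ∂P, Z ω ≤ c * Y ω + s) :
    distortionRisk P K ⇑Z ≤ c * distortionRisk P K ⇑Y + s := by
  have h1 : ⇑Z ≤ᵐ[P] ⇑(c • Y + constLp P p s) := by
    filter_upwards [hcert, Lp.coeFn_add (c • Y) (constLp P p s), Lp.coeFn_smul c Y,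
      constLp_coe (P := P) (p := p) s] with ω h1 h2 h3 h4
    rw [h2, Pi.add_apply, h3, Pi.smul_apply, smul_eq_mul, h4]
    exact h1
  calc distortionRisk P K ⇑Z ≤ distortionRisk P K ⇑(c • Y + constLp P p s) :=
        dr_mono K hp hfin hcont h1
    _ = c * distortionRisk P K ⇑Y + s := dr_affine K hp hfin hcont Y hc s

end DR

/-! ### The pre-risk measure given by affine domination certificates -/

section PreRisk

variable (K : DistortionKernel) {p : ℝ≥0∞} [Fact (1 ≤ p)]

/-- `preRisk K Y Z = inf { c ρ(Y) + s : c > 0, Z ≤ c Y + s a.e. }`. -/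
def preRisk (P : Measure Ω) [IsProbabilityMeasure P] (p : ℝ≥0∞) [Fact (1 ≤ p)]
    (K : DistortionKernel) (Y : Lp ℝ p P) (Z : Lp ℝ p P) : EReal :=
  ⨅ (c : ℝ) (_ : 0 < c) (s : ℝ) (_ : ∀ᵐ ω ∂P, Z ω ≤ c * Y ω + s),
    ((c * distortionRisk P K ⇑Y + s : ℝ) : EReal)

variable {Y : Lp ℝ p P}

lemma preRisk_le_of_cert {Z : Lp ℝ p P} {c s : ℝ} (hc : 0 < c)
    (hcert : ∀ᵐ ω ∂P, Z ω ≤ c * Y ω + s) :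
    preRisk P p K Y Z ≤ ((c * distortionRisk P K ⇑Y + s : ℝ) : EReal) := by
  refine iInf_le_of_le c ?_
  refine iInf_le_of_le hc ?_
  refine iInf_le_of_le s ?_
  exact iInf_le _ hcert

lemma le_preRisk {Z : Lp ℝ p P} {x : EReal}
    (h : ∀ c : ℝ, 0 < c → ∀ s : ℝ, (∀ᵐ ω ∂P, Z ω ≤ c * Y ω + s) →
      x ≤ ((c * distortionRisk P K ⇑Y + s : ℝ) : EReal)) :
    x ≤ preRisk P p K Y Z :=
  le_iInf fun c => le_iInf fun hc => le_iInf fun s => le_iInf fun hcert => h c hc s hcert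

variable (hp : p ≠ ∞)
  (hfin : ∀ X : Lp ℝ p P, IntegrableOn (fun t => VaR P (⇑X) t) (Set.Ioc 0 1)
    K.toStieltjes.measure)
  (hcont : Continuous fun X : Lp ℝ p P => distortionRisk P K ⇑X)

include hp hfin hcont in
lemma dr_le_preRisk (Z : Lp ℝ p P) :
    ((distortionRisk P K ⇑Z : ℝ) : EReal) ≤ preRisk P p K Y Z := by
  refine le_preRisk K fun c hc s hcert => ?_
  exact EReal.coe_le_coe_iff.2 (dr_key K hp hfin hcont hc hcert)

lemma preRisk_self_le : preRisk P p K Y Y ≤ ((distortionRisk P K ⇑Y : ℝ) : EReal) := by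
  have hcert : ∀ᵐ ω ∂P, Y ω ≤ 1 * Y ω + 0 := by
    filter_upwards with ω
    simp
  have := preRisk_le_of_cert K one_pos hcert
  simpa using this

lemma preRisk_mono {Z Z' : Lp ℝ p P} (h : ⇑Z ≤ᵐ[P] ⇑Z') :
    preRisk P p K Y Z ≤ preRisk P p K Y Z' := by
  refine le_preRisk K fun c hc s hcert => ?_
  refine preRisk_le_of_cert K hc ?_
  filter_upwards [h, hcert] with ω h1 h2
  exact le_trans h1 h2

lemma preRisk_add_const (Z : Lp ℝ p P) (a : ℝ) :
    preRisk P p K Y (Z + constLp P p a) = preRisk P p K Y Z + (a : EReal) := by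
  have hZa : ⇑(Z + constLp P p a) =ᵐ[P] fun ω => Z ω + a := by
    filter_upwards [Lp.coeFn_add Z (constLp P p a), constLp_coe (P := P) (p := p) a]
      with ω h1 h2
    rw [h1, Pi.add_apply, h2]
  apply le_antisymm
  · have hrhs : preRisk P p K Y Z + (a : EReal) =
        ⨅ (c : ℝ) (_ : 0 < c) (s : ℝ) (_ : ∀ᵐ ω ∂P, Z ω ≤ c * Y ω + s),
          (((c * distortionRisk P K ⇑Y + s : ℝ) : EReal) + (a : EReal)) := by
      show addIso a (preRisk P p K Y Z) = _
      simp only [preRisk, OrderIso.map_iInf, addIso_apply]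
    rw [hrhs]
    refine le_iInf fun c => le_iInf fun hc => le_iInf fun s => le_iInf fun hcert => ?_
    have hcert' : ∀ᵐ ω ∂P, (Z + constLp P p a) ω ≤ c * Y ω + (s + a) := by
      filter_upwards [hZa, hcert] with ω h1 h2
      rw [h1]; linarith
    refine le_trans (preRisk_le_of_cert K hc hcert') ?_
    rw [← EReal.coe_add]
    exact EReal.coe_le_coe_iff.2 (by ring_nf; exact le_rfl)
  · refine le_preRisk K fun c hc s hcert => ?_
    have hcert' : ∀ᵐ ω ∂P, Z ω ≤ c * Y ω + (s - a) := by
      filter_upwards [hZa, hcert] with ω h1 h2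
      rw [h1] at h2; linarith
    have h3 := preRisk_le_of_cert K hc hcert'
    calc preRisk P p K Y Z + (a : EReal)
        ≤ ((c * distortionRisk P K ⇑Y + (s - a) : ℝ) : EReal) + (a : EReal) :=
          add_le_add_left h3 _
      _ = ((c * distortionRisk P K ⇑Y + s : ℝ) : EReal) := by
          norm_cast
          ring

lemma preRisk_smul (Z : Lp ℝ p P) {a : ℝ} (ha : 0 < a) :
    preRisk P p K Y (a • Z) = (a : EReal) * preRisk P p K Y Z := by
  have hZa : ⇑(a • Z) =ᵐ[P] fun ω => a * Z ω := by
    filter_upwards [Lp.coeFn_smul a Z] with ω h1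
    rw [h1, Pi.smul_apply, smul_eq_mul]
  apply le_antisymm
  · have hrhs : (a : EReal) * preRisk P p K Y Z =
        ⨅ (c : ℝ) (_ : 0 < c) (s : ℝ) (_ : ∀ᵐ ω ∂P, Z ω ≤ c * Y ω + s),
          ((a : EReal) * ((c * distortionRisk P K ⇑Y + s : ℝ) : EReal)) := by
      show mulIso a ha (preRisk P p K Y Z) = _
      simp only [preRisk, OrderIso.map_iInf, mulIso_apply]
    rw [hrhs]
    refine le_iInf fun c => le_iInf fun hc => le_iInf fun s => le_iInf fun hcert => ?_
    have hcert' : ∀ᵐ ω ∂P, (a • Z) ω ≤ (a * c) * Y ω + a * s := by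
      filter_upwards [hZa, hcert] with ω h1 h2
      rw [h1]
      calc a * Z ω ≤ a * (c * Y ω + s) := by
            exact mul_le_mul_of_nonneg_left h2 ha.le
        _ = (a * c) * Y ω + a * s := by ring
    refine le_trans (preRisk_le_of_cert K (mul_pos ha hc) hcert') ?_
    rw [← EReal.coe_mul]
    exact EReal.coe_le_coe_iff.2 (le_of_eq (by ring))
  · refine le_preRisk K fun c hc s hcert => ?_
    have hcert' : ∀ᵐ ω ∂P, Z ω ≤ (c / a) * Y ω + s / a := by
      filter_upwards [hZa, hcert] with ω h1 h2
      rw [h1] at h2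
      have := mul_le_mul_of_nonneg_left h2 (inv_nonneg.2 ha.le)
      rw [← mul_assoc, inv_mul_cancel₀ ha.ne', one_mul] at this
      calc Z ω ≤ a⁻¹ * (c * Y ω + s) := this
        _ = (c / a) * Y ω + s / a := by field_simp
    have h3 := preRisk_le_of_cert K (div_pos hc ha) hcert'
    have h4 := mul_le_mul_of_nonneg_left h3 (EReal.coe_nonneg.2 ha.le)
    refine le_trans h4 ?_
    rw [← EReal.coe_mul]
    apply EReal.coe_le_coe_iff.2
    have heq : a * (c / a * distortionRisk P K ⇑Y + s / a) = c * distortionRisk P K ⇑Y + s := by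
      field_simp
    rw [heq]

include hp hfin hcont in
lemma preRisk_ne_bot (Z : Lp ℝ p P) : preRisk P p K Y Z ≠ ⊥ :=
  fun h => absurd (h ▸ dr_le_preRisk K hp hfin hcont Z) (by simp)

include hp hfin hcont in
lemma preRisk_subadd (Z W : Lp ℝ p P) :
    preRisk P p K Y (Z + W) ≤ preRisk P p K Y Z + preRisk P p K Y W := by
  rcases eq_or_ne (preRisk P p K Y Z) ⊤ with hZ | hZ
  · rw [hZ, EReal.top_add_of_ne_bot (preRisk_ne_bot K hp hfin hcont W)]
    exact le_top
  rcases eq_or_ne (preRisk P p K Y W) ⊤ with hW | hW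
  · rw [hW, EReal.add_top_of_ne_bot (preRisk_ne_bot K hp hfin hcont Z)]
    exact le_top
  obtain ⟨rA, hrA⟩ : ∃ r : ℝ, preRisk P p K Y Z = (r : EReal) := by
    lift (preRisk P p K Y Z) to ℝ using ⟨hZ, preRisk_ne_bot K hp hfin hcont Z⟩ with r hr
    exact ⟨r, rfl⟩
  obtain ⟨rB, hrB⟩ : ∃ r : ℝ, preRisk P p K Y W = (r : EReal) := by
    lift (preRisk P p K Y W) to ℝ using ⟨hW, preRisk_ne_bot K hp hfin hcont W⟩ with r hr
    exact ⟨r, rfl⟩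
  rw [hrA, hrB, ← EReal.coe_add]
  rw [← EReal.le_of_forall_lt_iff_le]
  intro z hz
  rw [EReal.coe_lt_coe_iff] at hz
  set ε : ℝ := (z - rA - rB) / 2 with hε
  have hεpos : 0 < ε := by simp only [hε]; linarith
  have hAlt : preRisk P p K Y Z < ((rA + ε : ℝ) : EReal) := by
    rw [hrA]; exact_mod_cast (by linarith : rA < rA + ε)
  have hBlt : preRisk P p K Y W < ((rB + ε : ℝ) : EReal) := by
    rw [hrB]; exact_mod_cast (by linarith : rB < rB + ε)
  obtain ⟨c1, hA2⟩ := iInf_lt_iff.1 hAlt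
  obtain ⟨hc1, hA3⟩ := iInf_lt_iff.1 hA2
  obtain ⟨s1, hA4⟩ := iInf_lt_iff.1 hA3
  obtain ⟨hcert1, hA5⟩ := iInf_lt_iff.1 hA4
  obtain ⟨c2, hB2⟩ := iInf_lt_iff.1 hBlt
  obtain ⟨hc2, hB3⟩ := iInf_lt_iff.1 hB2
  obtain ⟨s2, hB4⟩ := iInf_lt_iff.1 hB3
  obtain ⟨hcert2, hB5⟩ := iInf_lt_iff.1 hB4
  rw [EReal.coe_lt_coe_iff] at hA5 hB5
  have hcert : ∀ᵐ ω ∂P, (Z + W) ω ≤ (c1 + c2) * Y ω + (s1 + s2) := by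
    filter_upwards [Lp.coeFn_add Z W, hcert1, hcert2] with ω h1 h2 h3
    rw [h1, Pi.add_apply]
    have : (c1 + c2) * Y ω + (s1 + s2) = (c1 * Y ω + s1) + (c2 * Y ω + s2) := by ring
    rw [this]
    exact add_le_add h2 h3
  refine le_trans (preRisk_le_of_cert K (by linarith : (0:ℝ) < c1 + c2) hcert) ?_
  apply EReal.coe_le_coe_iff.2
  have : (c1 + c2) * distortionRisk P K ⇑Y + (s1 + s2) =
      (c1 * distortionRisk P K ⇑Y + s1) + (c2 * distortionRisk P K ⇑Y + s2) := by ring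
  rw [this]
  linarith

end PreRisk

/-! ### The lower semicontinuous hull -/

section Hull

variable {p : ℝ≥0∞} [Fact (1 ≤ p)]

/-- The lower semicontinuous hull of `preRisk`. -/
def hullRisk (P : Measure Ω) [IsProbabilityMeasure P] (p : ℝ≥0∞) [Fact (1 ≤ p)]
    (K : DistortionKernel) (Y : Lp ℝ p P) (Z : Lp ℝ p P) : EReal :=
  liminf (preRisk P p K Y) (𝓝 Z)

variable (K : DistortionKernel) {Y : Lp ℝ p P} (hp : p ≠ ∞)
  (hfin : ∀ X : Lp ℝ p P, IntegrableOn (fun t => VaR P (⇑X) t) (Set.Ioc 0 1)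
    K.toStieltjes.measure)
  (hcont : Continuous fun X : Lp ℝ p P => distortionRisk P K ⇑X)

include hp hfin hcont in
lemma dr_le_hullRisk (Z : Lp ℝ p P) :
    ((distortionRisk P K ⇑Z : ℝ) : EReal) ≤ hullRisk P p K Y Z := by
  have hten : Tendsto (fun W : Lp ℝ p P => ((distortionRisk P K ⇑W : ℝ) : EReal)) (𝓝 Z)
      (𝓝 ((distortionRisk P K ⇑Z : ℝ) : EReal)) :=
    (continuous_coe_real_ereal.tendsto _).comp (hcont.tendsto Z)
  calc ((distortionRisk P K ⇑Z : ℝ) : EReal)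
      = liminf (fun W : Lp ℝ p P => ((distortionRisk P K ⇑W : ℝ) : EReal)) (𝓝 Z) :=
        hten.liminf_eq.symm
    _ ≤ hullRisk P p K Y Z :=
        liminf_le_liminf (Eventually.of_forall fun W => dr_le_preRisk K hp hfin hcont W)

lemma hullRisk_self_le :
    hullRisk P p K Y Y ≤ ((distortionRisk P K ⇑Y : ℝ) : EReal) := by
  refine le_trans ?_ (preRisk_self_le K)
  exact liminf_le_of_frequently_le
    (frequently_iff.2 fun hU => ⟨Y, mem_of_mem_nhds hU, le_rfl⟩)

include hp hfin hcont in
lemma hullRisk_ne_bot (Z : Lp ℝ p P) : hullRisk P p K Y Z ≠ ⊥ := by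
  intro h
  exact absurd (h ▸ dr_le_hullRisk K hp hfin hcont Z) (by simp)

lemma hullRisk_lsc : LowerSemicontinuous (hullRisk P p K Y) := by
  intro Z y hy
  obtain ⟨y', hy1, hy2⟩ := exists_between hy
  have hev : ∀ᶠ W in 𝓝 Z, y' < preRisk P p K Y W := eventually_lt_of_lt_liminf hy2
  obtain ⟨U, hUsub, hUopen, hZU⟩ := eventually_nhds_iff.1 hev
  filter_upwards [hUopen.mem_nhds hZU] with W hW
  have hle : y' ≤ liminf (preRisk P p K Y) (𝓝 W) :=
    le_liminf_of_le (h := by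
      filter_upwards [hUopen.mem_nhds hW] with V hV
      exact (hUsub V hV).le)
  exact lt_of_lt_of_le hy1 hle

lemma hullRisk_mono {Z W : Lp ℝ p P} (h : ⇑Z ≤ᵐ[P] ⇑W) :
    hullRisk P p K Y Z ≤ hullRisk P p K Y W := by
  set D : Lp ℝ p P := W - Z with hD
  have hD0 : ∀ᵐ ω ∂P, 0 ≤ D ω := by
    filter_upwards [Lp.coeFn_sub W Z, h] with ω h1 h2
    rw [hD, h1, Pi.sub_apply]
    linarith
  have hZD : Z + D = W := by rw [hD]; abel
  have hmap : 𝓝 W = Filter.map (fun V => V + D) (𝓝 Z) := by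
    rw [← hZD]
    exact ((Homeomorph.addRight D).map_nhds_eq Z).symm
  rw [hullRisk, hullRisk, hmap, liminf_map']
  refine liminf_le_liminf ?_
  filter_upwards with V
  apply preRisk_mono K
  filter_upwards [Lp.coeFn_add V D, hD0] with ω h1 h2
  rw [h1, Pi.add_apply]
  linarith

lemma hullRisk_cash (Z : Lp ℝ p P) (a : ℝ) :
    hullRisk P p K Y (Z + constLp P p a) = hullRisk P p K Y Z + (a : EReal) := by
  have hmap : 𝓝 (Z + constLp P p a) = Filter.map (fun V => V + constLp P p a) (𝓝 Z) :=
    ((Homeomorph.addRight (constLp P p a)).map_nhds_eq Z).symm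
  rw [hullRisk, hmap, liminf_map']
  have hfun : (fun V => preRisk P p K Y (V + constLp P p a)) =
      fun V => preRisk P p K Y V + (a : EReal) := funext fun V => preRisk_add_const K V a
  rw [hfun, liminf_add_coe]
  rfl

lemma hullRisk_posHom (Z : Lp ℝ p P) {a : ℝ} (ha : 0 < a) :
    hullRisk P p K Y (a • Z) = (a : EReal) * hullRisk P p K Y Z := by
  have hmap : 𝓝 (a • Z) = Filter.map (fun V : Lp ℝ p P => a • V) (𝓝 Z) :=
    ((Homeomorph.smulOfNeZero a ha.ne').map_nhds_eq Z).symm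
  rw [hullRisk, hmap, liminf_map']
  have hfun : (fun V => preRisk P p K Y (a • V)) =
      fun V => (a : EReal) * preRisk P p K Y V := funext fun V => preRisk_smul K V ha
  rw [hfun, liminf_mul_coe _ _ ha]
  rfl

include hp hfin hcont in
lemma hullRisk_subadd (Z W : Lp ℝ p P) :
    hullRisk P p K Y (Z + W) ≤ hullRisk P p K Y Z + hullRisk P p K Y W := by
  rcases eq_or_ne (hullRisk P p K Y Z) ⊤ with hZ | hZ
  · rw [hZ, EReal.top_add_of_ne_bot (hullRisk_ne_bot K hp hfin hcont W)]
    exact le_top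
  rcases eq_or_ne (hullRisk P p K Y W) ⊤ with hW | hW
  · rw [hW, EReal.add_top_of_ne_bot (hullRisk_ne_bot K hp hfin hcont Z)]
    exact le_top
  obtain ⟨rA, hrA⟩ : ∃ r : ℝ, hullRisk P p K Y Z = (r : EReal) := by
    lift (hullRisk P p K Y Z) to ℝ using ⟨hZ, hullRisk_ne_bot K hp hfin hcont Z⟩ with r hr
    exact ⟨r, rfl⟩
  obtain ⟨rB, hrB⟩ : ∃ r : ℝ, hullRisk P p K Y W = (r : EReal) := by
    lift (hullRisk P p K Y W) to ℝ using ⟨hW, hullRisk_ne_bot K hp hfin hcont W⟩ with r hr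
    exact ⟨r, rfl⟩
  rw [hrA, hrB, ← EReal.coe_add, ← EReal.le_of_forall_lt_iff_le]
  intro z hz
  rw [EReal.coe_lt_coe_iff] at hz
  set ε : ℝ := (z - rA - rB) / 2 with hε
  have hεpos : 0 < ε := by rw [hε]; linarith
  have hfA : ∃ᶠ V in 𝓝 Z, preRisk P p K Y V < ((rA + ε : ℝ) : EReal) :=
    frequently_lt_of_liminf_lt (h := by
      show hullRisk P p K Y Z < _
      rw [hrA]
      exact_mod_cast (by linarith : rA < rA + ε))
  have hfB : ∃ᶠ V in 𝓝 W, preRisk P p K Y V < ((rB + ε : ℝ) : EReal) :=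
    frequently_lt_of_liminf_lt (h := by
      show hullRisk P p K Y W < _
      rw [hrB]
      exact_mod_cast (by linarith : rB < rB + ε))
  refine liminf_le_of_frequently_le ?_
  rw [frequently_iff]
  intro S hS
  have haddt : Tendsto (fun q : Lp ℝ p P × Lp ℝ p P => q.1 + q.2) (𝓝 Z ×ˢ 𝓝 W)
      (𝓝 (Z + W)) := by
    rw [← nhds_prod_eq]
    exact continuous_add.tendsto (Z, W)
  have hpre : (fun q : Lp ℝ p P × Lp ℝ p P => q.1 + q.2) ⁻¹' S ∈ 𝓝 Z ×ˢ 𝓝 W := haddt hS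
  obtain ⟨S1, hS1, S2, hS2, hsub⟩ := Filter.mem_prod_iff.1 hpre
  obtain ⟨V, hVS1, hV⟩ := frequently_iff.1 hfA hS1
  obtain ⟨V', hV'S2, hV'⟩ := frequently_iff.1 hfB hS2
  refine ⟨V + V', hsub (Set.mk_mem_prod hVS1 hV'S2), ?_⟩
  refine le_trans (preRisk_subadd K hp hfin hcont V V') ?_
  have hz2 : rA + ε + (rB + ε) = z := by rw [hε]; ring
  calc preRisk P p K Y V + preRisk P p K Y V'
      ≤ ((rA + ε : ℝ) : EReal) + ((rB + ε : ℝ) : EReal) := add_le_add hV.le hV'.le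
    _ = (z : EReal) := by rw [← EReal.coe_add, hz2]

include hp hfin hcont in
theorem exists_coherent_dominating (Y : Lp ℝ p P) :
    ∃ ρ : Lp ℝ p P → EReal, IsCoherentRiskMeasure P p ρ ∧
      (∀ Z : Lp ℝ p P, ((distortionRisk P K ⇑Z : ℝ) : EReal) ≤ ρ Z) ∧
      ρ Y ≤ ((distortionRisk P K ⇑Y : ℝ) : EReal) := by
  refine ⟨hullRisk P p K Y, ?_, fun Z => dr_le_hullRisk K hp hfin hcont Z,
    hullRisk_self_le K⟩
  constructor
  · exact fun Z => hullRisk_ne_bot K hp hfin hcont Z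
  · exact hullRisk_lsc K
  · exact fun c hc Z => hullRisk_posHom K Z hc
  · exact fun c Z => hullRisk_cash K Z c
  · exact fun Z W h => hullRisk_mono K h
  · exact fun Z W => hullRisk_subadd K hp hfin hcont Z W

end Hull

end StmtAux

theorem stmt4 (P : Measure Ω) [IsProbabilityMeasure P]
    (p : ℝ≥0∞) [Fact (1 ≤ p)] (hp : p ≠ ∞)
    (n : ℕ) (K : Fin n → DistortionKernel)
    (hfin : ∀ i (X : Lp ℝ p P),
      IntegrableOn (fun t => VaR P (⇑X) t) (Set.Ioc 0 1) (K i).toStieltjes.measure)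
    (hcont : ∀ i, Continuous fun X : Lp ℝ p P => distortionRisk P (K i) ⇑X)
    (lam : Fin n → ℝ) (hlam : ∀ i, 0 < lam i)
    (M : Fin n → Set (Lp ℝ p P))
    (hMclosed : ∀ i, IsClosed (M i)) (hMconvex : ∀ i, Convex ℝ (M i))
    (hMcone : ∀ i (c : ℝ), 0 < c → ∀ X ∈ M i, c • X ∈ M i)
    (X₀ : Lp ℝ p P) (mlb : ℝ) (hbd : ∀ᵐ ω ∂P, mlb ≤ X₀ ω)
    (Xs : Fin n → Lp ℝ p P) (hXs : ∑ i, Xs i = X₀)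
    (hopt : ∀ ρt : Fin n → (Lp ℝ p P → EReal),
      (∀ i, IsCoherentRiskMeasure P p (ρt i)) →
      (∀ i (Z : Lp ℝ p P), ((distortionRisk P (K i) ⇑Z : ℝ) : EReal) ≤ ρt i Z) →
      ∀ Ys : Fin n → Lp ℝ p P, ∑ i, Ys i = X₀ →
        ∑ i, (lam i : EReal) * restrictFn (ρt i) (M i) (Xs i) ≤
          ∑ i, (lam i : EReal) * restrictFn (ρt i) (M i) (Ys i)) :
    ∀ Ys : Fin n → Lp ℝ p P, ∑ i, Ys i = X₀ →
      ∑ i, (lam i : EReal) *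
          restrictFn (fun Z => ((distortionRisk P (K i) ⇑Z : ℝ) : EReal)) (M i) (Xs i) ≤
        ∑ i, (lam i : EReal) *
          restrictFn (fun Z => ((distortionRisk P (K i) ⇑Z : ℝ) : EReal)) (M i) (Ys i) := by
  intro Ys hYs
  have hex : ∀ i : Fin n, ∃ ρ : Lp ℝ p P → EReal, IsCoherentRiskMeasure P p ρ ∧
      (∀ Z : Lp ℝ p P, ((distortionRisk P (K i) ⇑Z : ℝ) : EReal) ≤ ρ Z) ∧
      ρ (Ys i) ≤ ((distortionRisk P (K i) ⇑(Ys i) : ℝ) : EReal) := fun i =>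
    StmtAux.exists_coherent_dominating (K i) hp (hfin i) (hcont i) (Ys i)
  choose ρt hcoh hdom hYsle using hex
  have H := hopt ρt hcoh hdom Ys hYs
  have h1 : ∑ i, (lam i : EReal) *
        restrictFn (fun Z => ((distortionRisk P (K i) ⇑Z : ℝ) : EReal)) (M i) (Xs i) ≤
      ∑ i, (lam i : EReal) * restrictFn (ρt i) (M i) (Xs i) := by
    apply Finset.sum_le_sum
    intro i _
    refine mul_le_mul_of_nonneg_left ?_ (EReal.coe_nonneg.2 (hlam i).le)
    unfold restrictFn
    split
    · exact hdom i (Xs i)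
    · exact le_rfl
  have h2 : ∑ i, (lam i : EReal) * restrictFn (ρt i) (M i) (Ys i) ≤
      ∑ i, (lam i : EReal) *
        restrictFn (fun Z => ((distortionRisk P (K i) ⇑Z : ℝ) : EReal)) (M i) (Ys i) := by
    apply Finset.sum_le_sum
    intro i _
    refine mul_le_mul_of_nonneg_left ?_ (EReal.coe_nonneg.2 (hlam i).le)
    unfold restrictFn
    split
    · exact hYsle i
    · exact le_rfl
  exact le_trans h1 (le_trans H h2)


end
end

section
/- Let α ∈ (0, 1) and suppose there exists A ∈ ℱ with 0 < P(A) < (1 − α)/2. Then for every X₀ ∈ L¹, the optimal allocation problem with ρ₁ = VaR_α and ρ₂ = E is unbounded: inf{VaR_α(X₁) + E(X₂) : X₁, X₂ ∈ L¹, X₁ + X₂ = X₀} = −∞. -/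
open MeasureTheory Filter
open scoped ENNReal Pointwise Classical

noncomputable section

variable {Ω : Type*} [MeasurableSpace Ω]


/-- The distortion risk measure of a nonnegative risk, with values in `[0, +∞]`. -/
def distortionRiskE (P : Measure Ω) (K : DistortionKernel) (X : Ω → ℝ) : ℝ≥0∞ :=
  ∫⁻ t in Set.Ioc (0 : ℝ) 1, ENNReal.ofReal (VaR P X t) ∂K.toStieltjes.measure


theorem stmt9 (P : Measure Ω) [IsProbabilityMeasure P]
    (α : ℝ) (hα : α ∈ Set.Ioo (0 : ℝ) 1)
    (A : Set Ω) (hA : MeasurableSet A) (hA0 : 0 < P A)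
    (hA1 : P A < ENNReal.ofReal ((1 - α) / 2))
    (X₀ : Ω → ℝ) (hX₀ : Integrable X₀ P) :
    ¬ BddBelow {r : ℝ | ∃ X₁ X₂ : Ω → ℝ, Integrable X₁ P ∧ Integrable X₂ P ∧
        X₁ + X₂ = X₀ ∧ r = VaR P X₁ α + ∫ ω, X₂ ω ∂P} := by
  obtain ⟨hα0, hα1⟩ := hα
  have hhalf : (0:ℝ) < (1 - α)/2 := by linarith
  -- a measurable version of X₀
  set X' := hX₀.1.mk X₀ with hX'def
  have hX'm : Measurable X' := hX₀.1.measurable_mk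
  have hae : X₀ =ᵐ[P] X' := hX₀.1.ae_eq_mk
  -- find x₀ with small tail
  have hiInter : (⋂ n : ℕ, {ω | (n:ℝ) < X' ω}) = ∅ := by
    ext ω
    simp only [Set.mem_iInter, Set.mem_setOf_eq, Set.mem_empty_iff_false, iff_false, not_forall,
      not_lt]
    obtain ⟨n, hn⟩ := exists_nat_gt (X' ω)
    exact ⟨n, hn.le⟩
  have htend : Tendsto (fun n : ℕ => P {ω | (n:ℝ) < X' ω}) atTop (nhds 0) := by
    have := tendsto_measure_iInter_atTop (μ := P) (s := fun n : ℕ => {ω | (n:ℝ) < X' ω})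
      (fun n => (hX'm measurableSet_Ioi).nullMeasurableSet)
      (fun n m hnm ω hω => lt_of_le_of_lt (by exact_mod_cast hnm : (n:ℝ) ≤ m) hω)
      ⟨0, measure_ne_top _ _⟩
    rwa [hiInter, measure_empty] at this
  obtain ⟨n₀, hn₀⟩ := (htend.eventually
    (gt_mem_nhds (ENNReal.ofReal_pos.2 hhalf))).exists
  set x₀ : ℝ := (n₀ : ℝ) with hx₀def
  have htail : P {ω | x₀ < X₀ ω} ≤ ENNReal.ofReal ((1 - α)/2) := by
    have heq : P {ω | x₀ < X₀ ω} = P {ω | x₀ < X' ω} := by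
      apply measure_congr
      filter_upwards [hae] with ω h
      show (x₀ < X₀ ω) = (x₀ < X' ω)
      rw [h]
    rw [heq]
    exact hn₀.le
  have hPAtop : P A ≠ ⊤ := (hA1.trans_le le_top).ne
  set p : ℝ := (P A).toReal with hpdef
  have hp : 0 < p := ENNReal.toReal_pos hA0.ne' hPAtop
  set M : ℝ := max x₀ 0 with hMdef
  rintro ⟨b, hb⟩
  obtain ⟨n, hn⟩ := exists_nat_gt ((M - b)/p)
  have hnp : M - b < n * p := (div_lt_iff₀ hp).1 hn
  set X₂ : Ω → ℝ := A.indicator (fun _ => -(n:ℝ)) with hX₂def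
  set X₁ : Ω → ℝ := fun ω => X₀ ω - X₂ ω with hX₁def
  have hI2 : Integrable X₂ P := (integrable_const _).indicator hA
  have hI1 : Integrable X₁ P := hX₀.sub hI2
  have hsum : X₁ + X₂ = X₀ := by
    funext ω; simp [hX₁def]
  have hint : ∫ ω, X₂ ω ∂P = -(n * p) := by
    rw [hX₂def, integral_indicator_const _ hA]
    simp [hpdef]; rw [measureReal_def]; ring
  -- VaR bound
  have hmem : P {ω | x₀ < X₁ ω} ≤ ENNReal.ofReal (1 - α) := by
    have hsub : {ω | x₀ < X₁ ω} ⊆ {ω | x₀ < X₀ ω} ∪ A := by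
      intro ω hω
      by_cases hωA : ω ∈ A
      · exact Or.inr hωA
      · left
        have : X₂ ω = 0 := Set.indicator_of_notMem hωA _
        simpa [hX₁def, this] using hω
    calc P {ω | x₀ < X₁ ω} ≤ P {ω | x₀ < X₀ ω} + P A := le_trans (measure_mono hsub)
          (measure_union_le _ _)
      _ ≤ ENNReal.ofReal ((1-α)/2) + ENNReal.ofReal ((1-α)/2) :=
          add_le_add htail hA1.le
      _ = ENNReal.ofReal (1 - α) := by
          rw [← ENNReal.ofReal_add hhalf.le hhalf.le]; ring_nf
  have hVaR : VaR P X₁ α ≤ M := by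
    unfold VaR
    by_cases hbdd : BddBelow {x : ℝ | P {ω | x < X₁ ω} ≤ ENNReal.ofReal (1 - α)}
    · exact le_trans (csInf_le hbdd hmem) (le_max_left _ _)
    · rw [Real.sInf_of_not_bddBelow hbdd]
      exact le_max_right _ _
  have hrmem : VaR P X₁ α + ∫ ω, X₂ ω ∂P ∈ {r : ℝ | ∃ X₁ X₂ : Ω → ℝ, Integrable X₁ P ∧
      Integrable X₂ P ∧ X₁ + X₂ = X₀ ∧ r = VaR P X₁ α + ∫ ω, X₂ ω ∂P} :=
    ⟨X₁, X₂, hI1, hI2, hsum, rfl⟩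
  have hble := hb hrmem
  rw [hint] at hble
  linarith

end
end

section
/- Let Φ be a distortion kernel with associated distortion risk measure ρ_Φ, let X₀ be a bounded random variable with X₀ ≥ 0 a.s., and let f : ℝ₊ → ℝ₊ be given by f(x) = ∫₀ˣ h(t) dt for a measurable function h : ℝ₊ → [0, 1]. Then ρ_Φ(f(X₀)) = ∫₀^∞ (1 − Φ(F_{X₀}(s))) h(s) ds. -/
open MeasureTheory Filter
open scoped ENNReal Pointwise Classical

noncomputable section

variable {Ω : Type*} [MeasurableSpace Ω]


def VaRset (P : Measure Ω) (Y : Ω → ℝ) (t : ℝ) : Set ℝ :=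
  {x : ℝ | P {ω | x < Y ω} ≤ ENNReal.ofReal (1 - t)}

section aux
variable (P : Measure Ω) [IsProbabilityMeasure P] {Y : Ω → ℝ} {M t s x y : ℝ}

lemma VaRset_upward (hx : x ∈ VaRset P Y t) (hxy : x ≤ y) : y ∈ VaRset P Y t :=
  le_trans (measure_mono fun ω hω => lt_of_le_of_lt hxy hω) hx

lemma mem_VaRset_of_ae_le (hM : ∀ᵐ ω ∂P, Y ω ≤ M) (t : ℝ) : M ∈ VaRset P Y t := by
  have hz : P {ω | M < Y ω} = 0 :=
    measure_mono_null (fun ω hω => not_le.2 hω) (ae_iff.1 hM)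
  simp [VaRset, hz]

lemma VaRset_nonempty (hM : ∀ᵐ ω ∂P, Y ω ≤ M) (t : ℝ) : (VaRset P Y t).Nonempty :=
  ⟨M, mem_VaRset_of_ae_le P hM t⟩

lemma nonneg_of_mem_VaRset (hY : ∀ᵐ ω ∂P, 0 ≤ Y ω) (ht : 0 < t)
    (hx : x ∈ VaRset P Y t) : 0 ≤ x := by
  by_contra hc
  push_neg at hc
  have hc0 : P {ω | x < Y ω}ᶜ = 0 := by
    refine measure_mono_null (fun ω hω => ?_) (ae_iff.1 hY)
    simp only [Set.mem_compl_iff, Set.mem_setOf_eq, not_lt] at hω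
    exact not_le.2 (lt_of_le_of_lt hω hc)
  have h1 : (1 : ℝ≥0∞) ≤ P {ω | x < Y ω} := by
    have h2 := measure_univ_le_add_compl (μ := P) (s := {ω | x < Y ω})
    rwa [measure_univ, hc0, add_zero] at h2
  have h3 : ENNReal.ofReal (1 - t) < 1 := by
    rw [ENNReal.ofReal_lt_one]; linarith
  exact absurd (le_trans h1 hx) (not_le.2 h3)

lemma VaRset_bddBelow (hY : ∀ᵐ ω ∂P, 0 ≤ Y ω) (ht : 0 < t) :
    BddBelow (VaRset P Y t) :=
  ⟨0, fun x hx => nonneg_of_mem_VaRset P hY ht hx⟩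

lemma VaR_nonneg_s16 (hY : ∀ᵐ ω ∂P, 0 ≤ Y ω) (hM : ∀ᵐ ω ∂P, Y ω ≤ M) (ht : 0 < t) :
    0 ≤ VaR P Y t :=
  le_csInf (VaRset_nonempty P hM t) fun x hx => nonneg_of_mem_VaRset P hY ht hx

lemma VaR_mem (hY : ∀ᵐ ω ∂P, 0 ≤ Y ω) (hM : ∀ᵐ ω ∂P, Y ω ≤ M) (ht : 0 < t) :
    VaR P Y t ∈ VaRset P Y t := by
  set V := VaR P Y t with hV
  have hsub : {ω | V < Y ω} = ⋃ n : ℕ, {ω | V + 1 / (n + 1) < Y ω} := by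
    ext ω
    simp only [Set.mem_setOf_eq, Set.mem_iUnion]
    constructor
    · intro hω
      obtain ⟨n, hn⟩ := exists_nat_one_div_lt (sub_pos.2 hω)
      exact ⟨n, by linarith⟩
    · rintro ⟨n, hn⟩
      have hp : 0 < 1 / ((n : ℝ) + 1) := by positivity
      linarith
  have hmono : Monotone fun n : ℕ => {ω | V + 1 / (n + 1) < Y ω} := by
    intro m n hmn ω hω
    simp only [Set.mem_setOf_eq] at *
    have h1 : 1 / ((n : ℝ) + 1) ≤ 1 / ((m : ℝ) + 1) := by
      apply one_div_le_one_div_of_le (by positivity)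
      have : (m : ℝ) ≤ n := by exact_mod_cast hmn
      linarith
    linarith
  show P {ω | V < Y ω} ≤ ENNReal.ofReal (1 - t)
  rw [hsub]
  refine le_of_tendsto' (tendsto_measure_iUnion_atTop hmono) fun n => ?_
  have hlt : V < V + 1 / (n + 1) := by
    have hp : 0 < 1 / ((n : ℝ) + 1) := by positivity
    linarith
  obtain ⟨z, hz, hzlt⟩ :=
    (csInf_lt_iff (VaRset_bddBelow P hY ht) (VaRset_nonempty P hM t)).1 hlt
  exact VaRset_upward P hz hzlt.le

lemma VaR_le_iff (hY : ∀ᵐ ω ∂P, 0 ≤ Y ω) (hM : ∀ᵐ ω ∂P, Y ω ≤ M) (ht : 0 < t) :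
    VaR P Y t ≤ s ↔ s ∈ VaRset P Y t := by
  constructor
  · intro hVs
    exact VaRset_upward P (VaR_mem P hY hM ht) hVs
  · intro hs
    exact csInf_le (VaRset_bddBelow P hY ht) hs

lemma VaR_mono' (hY : ∀ᵐ ω ∂P, 0 ≤ Y ω) (hM : ∀ᵐ ω ∂P, Y ω ≤ M) :
    Monotone fun t : ℝ => if 0 < t then VaR P Y t else 0 := by
  intro t₁ t₂ ht
  dsimp only
  by_cases h1 : 0 < t₁
  · have h2 : 0 < t₂ := lt_of_lt_of_le h1 ht
    rw [if_pos h1, if_pos h2]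
    refine csInf_le_csInf (VaRset_bddBelow P hY h1) (VaRset_nonempty P hM t₂) ?_
    intro z hz
    exact le_trans hz (ENNReal.ofReal_le_ofReal (by linarith))
  · rw [if_neg h1]
    by_cases h2 : 0 < t₂
    · rw [if_pos h2]; exact VaR_nonneg_s16 P hY hM h2
    · rw [if_neg h2]

lemma cdf_mono' (X₀ : Ω → ℝ) : Monotone (fun s => (P {ω | X₀ ω ≤ s}).toReal) := by
  intro a b hab
  exact ENNReal.toReal_mono (measure_ne_top P _)
    (measure_mono fun ω hω => le_trans hω hab)

lemma prob_gt_le_iff (X₀ : Ω → ℝ) (hmeas : Measurable X₀) (ht1 : t ≤ 1) :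
    P {ω | s < X₀ ω} ≤ ENNReal.ofReal (1 - t) ↔ t ≤ (P {ω | X₀ ω ≤ s}).toReal := by
  have hset : {ω | s < X₀ ω} = {ω | X₀ ω ≤ s}ᶜ := by
    ext ω; simp [not_le]
  have hms : MeasurableSet {ω | X₀ ω ≤ s} := hmeas measurableSet_Iic
  set F : ℝ := (P {ω | X₀ ω ≤ s}).toReal with hF
  have hF0 : 0 ≤ F := ENNReal.toReal_nonneg
  have hPF : P {ω | X₀ ω ≤ s} = ENNReal.ofReal F := by
    rw [hF, ENNReal.ofReal_toReal (measure_ne_top P _)]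
  rw [hset, prob_compl_eq_one_sub hms, hPF, tsub_le_iff_right,
    ← ENNReal.ofReal_add (by linarith) hF0, ← ENNReal.ofReal_one,
    ENNReal.ofReal_le_ofReal_iff (by linarith)]
  constructor <;> intro <;> linarith

end aux

theorem stmt16 (P : Measure Ω) [IsProbabilityMeasure P] (K : DistortionKernel)
    (X₀ : Ω → ℝ) (hmeas : Measurable X₀) (h0 : ∀ᵐ ω ∂P, 0 ≤ X₀ ω)
    (Mb : ℝ) (hMb : ∀ᵐ ω ∂P, X₀ ω ≤ Mb)
    (h : ℝ → ℝ) (hh : Measurable h) (hh0 : ∀ t, 0 ≤ h t) (hh1 : ∀ t, h t ≤ 1)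
    (f : ℝ → ℝ) (hf : ∀ x, f x = ∫ t in (0 : ℝ)..x, h t) :
    distortionRisk P K (fun ω => f (X₀ ω)) =
      ∫ s in Set.Ioi (0 : ℝ), (1 - K.toStieltjes (cdf P X₀ s)) * h s := by
  classical
  set Φ := K.toStieltjes with hPhi
  set M : ℝ := max Mb 0 with hM
  have hM0 : (0:ℝ) ≤ M := le_max_right _ _
  have hX0M : ∀ᵐ ω ∂P, X₀ ω ≤ M := hMb.mono fun ω hω => le_trans hω (le_max_left _ _)
  -- facts about f
  have hint : ∀ a b : ℝ, IntervalIntegrable h volume a b := by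
    intro a b
    rw [intervalIntegrable_iff]
    refine Integrable.mono' (g := fun _ => (1:ℝ)) ?_ hh.aestronglyMeasurable.restrict
      (ae_of_all _ fun x => ?_)
    · exact integrableOn_const measure_Ioc_lt_top.ne (by simp)
    · simp only [Real.norm_eq_abs, abs_le]
      exact ⟨by linarith [hh0 x], by linarith [hh1 x]⟩
  have hkey : ∀ x y : ℝ, f x - f y = ∫ t in y..x, h t := by
    intro x y
    rw [hf x, hf y]
    have h1 := intervalIntegral.integral_add_adjacent_intervals (hint 0 y) (hint y x)
    linarith
  have hfmono : Monotone f := by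
    intro x y hxy
    have h1 := hkey y x
    have h2 : 0 ≤ ∫ t in x..y, h t := intervalIntegral.integral_nonneg hxy fun u _ => hh0 u
    linarith
  have hfcont : Continuous f := by
    refine (LipschitzWith.of_dist_le_mul (K := 1) fun x y => ?_).continuous
    rw [Real.dist_eq, Real.dist_eq, hkey x y]
    have h1 : ∀ z ∈ Set.uIoc y x, ‖h z‖ ≤ 1 := fun z _ => by
      rw [Real.norm_eq_abs, abs_le]; exact ⟨by linarith [hh0 z], hh1 z⟩
    have := intervalIntegral.norm_integral_le_of_norm_le_const h1
    rw [Real.norm_eq_abs] at this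
    calc |∫ t in y..x, h t| ≤ 1 * |x - y| := this
      _ = ↑(1:NNReal) * |x - y| := by norm_num
  have hf00 : f 0 = 0 := by rw [hf 0, intervalIntegral.integral_same]
  have hf0 : ∀ x : ℝ, 0 ≤ x → 0 ≤ f x := fun x hx => hf00 ▸ hfmono hx
  have hfle : ∀ x : ℝ, 0 ≤ x → f x ≤ x := by
    intro x hx
    rw [hf x]
    calc ∫ t in (0:ℝ)..x, h t ≤ ∫ _t in (0:ℝ)..x, (1:ℝ) :=
          intervalIntegral.integral_mono_on hx (hint 0 x) intervalIntegrable_const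
            fun u _ => hh1 u
      _ = x := by simp
  have hfof : ∀ v : ℝ, 0 ≤ v →
      ENNReal.ofReal (f v) = ∫⁻ u in Set.Ioo (0:ℝ) v, ENNReal.ofReal (h u) := by
    intro v hv
    have hi : IntegrableOn h (Set.Ioo (0:ℝ) v) volume := by
      refine Integrable.mono' (g := fun _ => (1:ℝ)) ?_ hh.aestronglyMeasurable.restrict
        (ae_of_all _ fun x => ?_)
      · exact integrableOn_const measure_Ioo_lt_top.ne (by simp)
      · simp only [Real.norm_eq_abs, abs_le]
        exact ⟨by linarith [hh0 x], by linarith [hh1 x]⟩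
    rw [hf v, intervalIntegral.integral_of_le hv, integral_Ioc_eq_integral_Ioo,
      ofReal_integral_eq_lintegral_ofReal hi (ae_of_all _ fun u => hh0 u)]
  -- the transformed risk
  set X₁ : Ω → ℝ := fun ω => f (X₀ ω) with hX₁
  have h0' : ∀ᵐ ω ∂P, 0 ≤ X₁ ω := h0.mono fun ω hω => hf0 _ hω
  have hM' : ∀ᵐ ω ∂P, X₁ ω ≤ M := (h0.and hX0M).mono fun ω hω =>
    le_trans (hfle _ hω.1) hω.2
  -- VaR transform
  have htrans : ∀ t ∈ Set.Ioc (0:ℝ) 1, VaR P X₁ t = f (VaR P X₀ t) := by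
    rintro t ⟨ht0, _ht1⟩
    have hV0 : 0 ≤ VaR P X₀ t := VaR_nonneg_s16 P h0 hX0M ht0
    refine le_antisymm ?_ ?_
    · refine csInf_le (VaRset_bddBelow P h0' ht0) ?_
      refine le_trans (measure_mono ?_) (VaR_mem P h0 hX0M ht0)
      intro ω hω
      simp only [Set.mem_setOf_eq] at hω ⊢
      by_contra hc
      push_neg at hc
      exact absurd (hfmono hc) (not_le.2 hω)
    · refine le_csInf (VaRset_nonempty P hM' t) fun b hb => ?_
      by_contra hc
      push_neg at hc
      set c : ℝ := (b + f (VaR P X₀ t)) / 2 with hcdef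
      have hb0 : 0 ≤ b := nonneg_of_mem_VaRset P h0' ht0 hb
      have hc1 : b < c := by rw [hcdef]; linarith
      have hc2 : c < f (VaR P X₀ t) := by rw [hcdef]; linarith
      have hmemIcc : c ∈ Set.Icc (f 0) (f (VaR P X₀ t)) := ⟨by rw [hf00]; linarith, hc2.le⟩
      obtain ⟨z, hzIcc, hfz⟩ := intermediate_value_Icc hV0 hfcont.continuousOn hmemIcc
      have hzV : z < VaR P X₀ t := by
        rcases lt_or_eq_of_le hzIcc.2 with hlt | heq
        · exact hlt
        · rw [heq] at hfz; rw [hfz] at hc2; exact absurd hc2 (lt_irrefl _)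
      have hznot : z ∉ VaRset P X₀ t := fun hmem =>
        absurd (csInf_le (VaRset_bddBelow P h0 ht0) hmem) (not_le.2 hzV)
      refine hznot (le_trans (measure_mono ?_) hb)
      intro ω hω
      simp only [Set.mem_setOf_eq] at hω ⊢
      have : f z ≤ f (X₀ ω) := hfmono hω.le
      rw [hfz] at this
      linarith
  -- monotone measurable versions
  set V' : ℝ → ℝ := fun t => if 0 < t then VaR P X₀ t else 0 with hV'
  have hV'mono : Monotone V' := VaR_mono' P h0 hX0M
  have hV'meas : Measurable V' := hV'mono.measurable
  set F : ℝ → ℝ := cdf P X₀ with hFdef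
  have hFmono : Monotone F := cdf_mono' P X₀
  have hFmeas : Measurable F := hFmono.measurable
  have hF0 : ∀ u, 0 ≤ F u := fun u => ENNReal.toReal_nonneg
  have hF1 : ∀ u, F u ≤ 1 := by
    intro u
    have h1 : P {ω | X₀ ω ≤ u} ≤ 1 := prob_le_one
    have := ENNReal.toReal_mono ENNReal.one_ne_top h1
    simpa [hFdef, cdf] using this
  have hPhimono : Monotone (Φ : ℝ → ℝ) := Φ.mono
  have hPhi1 : (Φ : ℝ → ℝ) 1 = 1 := K.one_of_one_le 1 le_rfl
  have hPhile1 : ∀ u : ℝ, u ≤ 1 → (Φ : ℝ → ℝ) u ≤ 1 := fun u hu =>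
    hPhi1 ▸ hPhimono hu
  have hPhi0 : ∀ u : ℝ, 0 ≤ (Φ : ℝ → ℝ) u := by
    intro u
    rcases le_or_gt u 0 with hu | hu
    · rw [K.zero_of_nonpos u hu]
    · rw [← K.zero_of_nonpos 0 le_rfl]
      exact hPhimono hu.le
  -- combined characterization
  have hiff : ∀ t ∈ Set.Ioc (0:ℝ) 1, ∀ u : ℝ, (VaR P X₀ t ≤ u ↔ t ≤ F u) := by
    rintro t ⟨ht0, ht1⟩ u
    rw [VaR_le_iff P h0 hX0M ht0]
    exact prob_gt_le_iff P X₀ hmeas ht1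
  -- set equality
  have hsetEq : ∀ u : ℝ, {t : ℝ | u < V' t} ∩ Set.Ioc (0:ℝ) 1 = Set.Ioc (F u) 1 := by
    intro u
    ext t
    simp only [Set.mem_inter_iff, Set.mem_setOf_eq, Set.mem_Ioc]
    constructor
    · rintro ⟨huV, ht0, ht1⟩
      rw [hV'] at huV
      simp only [if_pos ht0] at huV
      refine ⟨?_, ht1⟩
      by_contra hcc
      push_neg at hcc
      have := ((hiff t ⟨ht0, ht1⟩ u).2 hcc)
      linarith
    · rintro ⟨hFt, ht1⟩
      have ht0 : 0 < t := lt_of_le_of_lt (hF0 u) hFt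
      refine ⟨?_, ht0, ht1⟩
      rw [hV']
      simp only [if_pos ht0]
      by_contra hcc
      push_neg at hcc
      have := (hiff t ⟨ht0, ht1⟩ u).1 hcc
      linarith
  -- the product kernel
  set g : ℝ → ℝ → ℝ≥0∞ :=
    fun t u => {p : ℝ × ℝ | p.2 < V' p.1}.indicator (fun p => ENNReal.ofReal (h p.2)) (t, u)
    with hg
  have hmeasSet : MeasurableSet {p : ℝ × ℝ | p.2 < V' p.1} :=
    measurableSet_lt measurable_snd (hV'meas.comp measurable_fst)
  have hgmeas : Measurable (Function.uncurry g) := by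
    have huncurry : Function.uncurry g =
        {p : ℝ × ℝ | p.2 < V' p.1}.indicator (fun p => ENNReal.ofReal (h p.2)) := by
      funext p; rfl
    rw [huncurry]
    exact (ENNReal.measurable_ofReal.comp (hh.comp measurable_snd)).indicator hmeasSet
  have hgapp : ∀ t u : ℝ, g t u = if u < V' t then ENNReal.ofReal (h u) else 0 := by
    intro t u
    rw [hg]
    simp [Set.indicator_apply]
  -- step 1 : pointwise layer cake over t
  have hL1 : ∫⁻ t in Set.Ioc (0:ℝ) 1, ENNReal.ofReal (VaR P X₁ t) ∂Φ.measure
      = ∫⁻ t in Set.Ioc (0:ℝ) 1, ∫⁻ u in Set.Ioi (0:ℝ), g t u ∂volume ∂Φ.measure := by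
    refine setLIntegral_congr_fun measurableSet_Ioc fun t ht => ?_
    have hV0 : 0 ≤ VaR P X₀ t := VaR_nonneg_s16 P h0 hX0M ht.1
    rw [htrans t ht, hfof _ hV0]
    have hIoo : Set.Ioo (0:ℝ) (VaR P X₀ t) = Set.Iio (VaR P X₀ t) ∩ Set.Ioi 0 := by
      ext u; simp only [Set.mem_Ioo, Set.mem_inter_iff, Set.mem_Iio, Set.mem_Ioi]; tauto
    rw [hIoo, ← Measure.restrict_restrict measurableSet_Iio,
      ← lintegral_indicator measurableSet_Iio]
    refine lintegral_congr fun u => ?_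
    rw [hgapp t u, Set.indicator_apply]
    simp only [Set.mem_Iio, hV', if_pos ht.1]
  -- step 2 : Tonelli
  have hswap : ∫⁻ t in Set.Ioc (0:ℝ) 1, ∫⁻ u in Set.Ioi (0:ℝ), g t u ∂volume ∂Φ.measure
      = ∫⁻ u in Set.Ioi (0:ℝ), ∫⁻ t in Set.Ioc (0:ℝ) 1, g t u ∂Φ.measure ∂volume :=
    lintegral_lintegral_swap hgmeas.aemeasurable
  -- step 3 : inner integral
  have hinner : ∀ u : ℝ, ∫⁻ t in Set.Ioc (0:ℝ) 1, g t u ∂Φ.measure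
      = ENNReal.ofReal ((1 - Φ (F u)) * h u) := by
    intro u
    have hsetm : MeasurableSet {t : ℝ | u < V' t} :=
      measurableSet_lt measurable_const hV'meas
    calc ∫⁻ t in Set.Ioc (0:ℝ) 1, g t u ∂Φ.measure
        = ∫⁻ t in Set.Ioc (0:ℝ) 1,
            {t : ℝ | u < V' t}.indicator (fun _ => ENNReal.ofReal (h u)) t ∂Φ.measure := by
          refine lintegral_congr fun t => ?_
          rw [hgapp t u, Set.indicator_apply]
          simp only [Set.mem_setOf_eq]
      _ = ∫⁻ _t in {t : ℝ | u < V' t} ∩ Set.Ioc (0:ℝ) 1, ENNReal.ofReal (h u) ∂Φ.measure := by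
          rw [lintegral_indicator hsetm, Measure.restrict_restrict hsetm]
      _ = ENNReal.ofReal (h u) * Φ.measure (Set.Ioc (F u) 1) := by
          rw [hsetEq u, setLIntegral_const]
      _ = ENNReal.ofReal ((1 - Φ (F u)) * h u) := by
          rw [Φ.measure_Ioc, hPhi1, mul_comm, ← ENNReal.ofReal_mul (by linarith [hPhi0 (F u), hPhile1 (F u) (hF1 u)])]
  -- assemble
  have hAE1 : AEStronglyMeasurable (fun t => VaR P X₁ t)
      (Φ.measure.restrict (Set.Ioc (0:ℝ) 1)) := by
    have hEq : (fun t => f (V' t)) =ᵐ[Φ.measure.restrict (Set.Ioc (0:ℝ) 1)]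
        fun t => VaR P X₁ t := by
      filter_upwards [ae_restrict_mem measurableSet_Ioc] with t ht
      rw [htrans t ht, hV']
      simp only [if_pos ht.1]
    exact ((hfcont.measurable.comp hV'meas).aestronglyMeasurable).congr hEq
  have hpos1 : 0 ≤ᵐ[Φ.measure.restrict (Set.Ioc (0:ℝ) 1)] fun t => VaR P X₁ t := by
    filter_upwards [ae_restrict_mem measurableSet_Ioc] with t ht
    exact VaR_nonneg_s16 P h0' hM' ht.1
  have hAE2 : AEStronglyMeasurable (fun u => (1 - Φ (F u)) * h u)
      (volume.restrict (Set.Ioi (0:ℝ))) :=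
    ((measurable_const.sub (hPhimono.measurable.comp hFmeas)).mul hh).aestronglyMeasurable
  have hpos2 : 0 ≤ᵐ[volume.restrict (Set.Ioi (0:ℝ))] fun u => (1 - Φ (F u)) * h u :=
    ae_of_all _ fun u => mul_nonneg (by linarith [hPhile1 (F u) (hF1 u)]) (hh0 u)
  rw [distortionRisk]
  rw [integral_eq_lintegral_of_nonneg_ae hpos1 hAE1,
    integral_eq_lintegral_of_nonneg_ae hpos2 hAE2]
  congr 1
  rw [hL1, hswap]
  exact lintegral_congr fun u => hinner u

end
end
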